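/- arXiv:1309.1559 — 5 statements merged into one kernel-verified Lean document; each statement's English description precedes it below -/
import Mathlib

section
/- Let G be a graph, let F be a subset of its vertices, and let TF be a minimal triangulation of the induced subgraph G[F]. Then there exists a minimal triangulation TG of G such that TF is the subgraph of TG induced by F; equivalently, for every clique K of TG, the set K ∩ F is a (possibly empty) clique of TF. -/
/-! Common definitions: chordality, (minimal) triangulations, potential maximal cliques,
minimal separators, tree decompositions and treewidth, minors and minor models,
planarity (via Wagner's characterization), circle and circular-arc graphs, grids. -/

/-- A chord of a closed walk `c` in `G`: an edge of `G` between two vertices of the walk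
that is not an edge of the walk (i.e. joining two nonconsecutive vertices of a cycle). -/
def HasChord {V : Type} (G : SimpleGraph V) {v : V} (c : G.Walk v v) : Prop :=
  ∃ u w : V, u ∈ c.support ∧ w ∈ c.support ∧ G.Adj u w ∧ s(u, w) ∉ c.edges

/-- A graph is chordal if every cycle of length at least four has a chord. -/
def Chordal {V : Type} (G : SimpleGraph V) : Prop :=
  ∀ (v : V) (c : G.Walk v v), c.IsCycle → 4 ≤ c.length → HasChord G c

/-- `H` is a triangulation of `G`: a chordal supergraph of `G` on the same vertex set. -/
def IsTriangulation {V : Type} (G H : SimpleGraph V) : Prop :=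
  G ≤ H ∧ Chordal H

/-- `H` is a minimal triangulation of `G`: no proper subgraph of `H` containing `G`
is chordal. -/
def IsMinimalTriangulation {V : Type} (G H : SimpleGraph V) : Prop :=
  IsTriangulation G H ∧ ∀ H' : SimpleGraph V, G ≤ H' → H' < H → ¬ Chordal H'

/-- A maximal clique: a clique contained in no strictly larger clique. -/
def IsMaxClique {V : Type} (G : SimpleGraph V) (S : Set V) : Prop :=
  G.IsClique S ∧ ∀ T : Set V, G.IsClique T → S ⊆ T → T = S

/-- A potential maximal clique of `G`: a maximal clique of some minimal triangulation of `G`. -/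
def IsPotentialMaximalClique {V : Type} (G : SimpleGraph V) (Ω : Set V) : Prop :=
  ∃ H : SimpleGraph V, IsMinimalTriangulation G H ∧ IsMaxClique H Ω

/-- `S` is a `u,v`-separator: `u, v ∉ S` and every walk from `u` to `v` meets `S`
(equivalently, `u` and `v` lie in different components of `G − S`). -/
def IsSeparator {V : Type} (G : SimpleGraph V) (u v : V) (S : Set V) : Prop :=
  u ∉ S ∧ v ∉ S ∧ ∀ p : G.Walk u v, ∃ x ∈ p.support, x ∈ S

/-- A minimal separator of `G`: a minimal `u,v`-separator for some nonadjacent pair `u ≠ v`. -/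
def IsMinimalSeparator {V : Type} (G : SimpleGraph V) (S : Set V) : Prop :=
  ∃ u v : V, u ≠ v ∧ ¬ G.Adj u v ∧ IsSeparator G u v S ∧
    ∀ S' : Set V, S' ⊂ S → ¬ IsSeparator G u v S'

/-- `(T, bag)` is a tree decomposition of `G`. -/
def IsTreeDecomposition {V ι : Type} (G : SimpleGraph V) (T : SimpleGraph ι)
    (bag : ι → Set V) : Prop :=
  T.IsTree ∧
  (∀ v : V, ∃ i, v ∈ bag i) ∧
  (∀ u v : V, G.Adj u v → ∃ i, u ∈ bag i ∧ v ∈ bag i) ∧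
  (∀ v : V, (T.induce {i | v ∈ bag i}).Connected)

/-- `G` has a tree decomposition of width at most `k`. -/
def HasTreeDecompOfWidth {V : Type} (G : SimpleGraph V) (k : ℕ) : Prop :=
  ∃ (ι : Type) (T : SimpleGraph ι) (bag : ι → Set V),
    IsTreeDecomposition G T bag ∧ ∀ i, (bag i).ncard ≤ k + 1

/-- The treewidth of `G`: the least width of a tree decomposition of `G`. -/
noncomputable def treewidth {V : Type} (G : SimpleGraph V) : ℕ :=
  sInf {k | HasTreeDecompOfWidth G k}

/-- `H` is a minor of `G` (branch-set formulation: nonempty pairwise disjoint connected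
branch sets, with an edge of `G` between branch sets of adjacent vertices of `H`). -/
def IsMinorOf {W V : Type} (H : SimpleGraph W) (G : SimpleGraph V) : Prop :=
  ∃ B : W → Set V,
    (∀ w, (B w).Nonempty) ∧
    (∀ w, (G.induce (B w)).Connected) ∧
    (∀ w₁ w₂ : W, w₁ ≠ w₂ → Disjoint (B w₁) (B w₂)) ∧
    (∀ w₁ w₂ : W, H.Adj w₁ w₂ → ∃ u ∈ B w₁, ∃ v ∈ B w₂, G.Adj u v)

/-- `M` is the vertex set of a minor model of `H` in `G`. -/
def IsMinorModel {W V : Type} (H : SimpleGraph W) (G : SimpleGraph V) (M : Set V) : Prop :=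
  ∃ B : W → Set V,
    (∀ w, (B w).Nonempty) ∧
    (∀ w, (G.induce (B w)).Connected) ∧
    (∀ w₁ w₂ : W, w₁ ≠ w₂ → Disjoint (B w₁) (B w₂)) ∧
    (∀ w₁ w₂ : W, H.Adj w₁ w₂ → ∃ u ∈ B w₁, ∃ v ∈ B w₂, G.Adj u v) ∧
    M = ⋃ w, B w

/-- Planarity, via Wagner's characterization: a finite simple graph is planar iff it has
neither `K₅` nor `K₃,₃` as a minor. -/
def IsPlanar {W : Type} (G : SimpleGraph W) : Prop :=
  ¬ IsMinorOf (SimpleGraph.completeGraph (Fin 5)) G ∧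
  ¬ IsMinorOf (completeBipartiteGraph (Fin 3) (Fin 3)) G

/-- A circle graph: an intersection graph of chords of the unit circle. -/
def IsCircleGraph {V : Type} (G : SimpleGraph V) : Prop :=
  ∃ a b : V → EuclideanSpace ℝ (Fin 2),
    (∀ v, a v ∈ Metric.sphere (0 : EuclideanSpace ℝ (Fin 2)) 1) ∧
    (∀ v, b v ∈ Metric.sphere (0 : EuclideanSpace ℝ (Fin 2)) 1) ∧
    (∀ v, a v ≠ b v) ∧
    ∀ v w : V, v ≠ w →
      (G.Adj v w ↔ (segment ℝ (a v) (b v) ∩ segment ℝ (a w) (b w)).Nonempty)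

/-- A circular-arc graph: an intersection graph of arcs of the unit circle, an arc being
the image of an interval `[s, t]` under the circle parametrization `θ ↦ e^{iθ}`. -/
def IsCircularArcGraph {V : Type} (G : SimpleGraph V) : Prop :=
  ∃ s t : V → ℝ,
    (∀ v, s v ≤ t v) ∧
    ∀ v w : V, v ≠ w →
      (G.Adj v w ↔
        (circleMap 0 1 '' Set.Icc (s v) (t v) ∩
          circleMap 0 1 '' Set.Icc (s w) (t w)).Nonempty)

/-- A weakly chordal graph: neither the graph nor its complement contains an induced cycle
of length at least five, i.e. every such cycle has a chord. -/
def WeaklyChordal {V : Type} (G : SimpleGraph V) : Prop :=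
  (∀ (v : V) (c : G.Walk v v), c.IsCycle → 5 ≤ c.length → HasChord G c) ∧
  (∀ (v : V) (c : Gᶜ.Walk v v), c.IsCycle → 5 ≤ c.length → HasChord Gᶜ c)

/-- The clique number of `G`: the maximum size of a clique. -/
noncomputable def cliqueNumber {V : Type} (G : SimpleGraph V) : ℕ :=
  sSup {n | ∃ S : Set V, G.IsClique S ∧ S.ncard = n}

/-- `C` is a connected component of the graph `G − Ω`. -/
def IsConnCompAvoiding {V : Type} (G : SimpleGraph V) (Ω C : Set V) : Prop :=
  C.Nonempty ∧ C ⊆ Ωᶜ ∧ (G.induce C).Connected ∧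
  ∀ u v : V, u ∈ C → v ∈ Ωᶜ → G.Adj u v → v ∈ C

/-- The `k × k` grid graph. -/
def gridGraph (k : ℕ) : SimpleGraph (Fin k × Fin k) :=
  SimpleGraph.fromRel fun p q =>
    (p.1 = q.1 ∧ p.2.val + 1 = q.2.val) ∨ (p.2 = q.2 ∧ p.1.val + 1 = q.1.val)


namespace FVaux

open SimpleGraph

variable {V : Type}

lemma induce_mono' {F : Set V} {G H : SimpleGraph V} (h : G ≤ H) :
    G.induce F ≤ H.induce F := by
  intro a b hab
  exact h hab

/-- An induced subgraph of a chordal graph is chordal. -/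
lemma chordal_induce {F : Set V} {H : SimpleGraph V} (hH : Chordal H) :
    Chordal (H.induce F) := by
  intro v q hq hlen
  have hinj : Function.Injective ((SimpleGraph.Embedding.induce F (G := H))) :=
    (SimpleGraph.Embedding.induce F (G := H)).injective
  have hc : ((q.map (SimpleGraph.Embedding.induce F (G := H)).toHom)).IsCycle :=
    hq.map hinj
  obtain ⟨u, w, hu, hw, hadj, hne⟩ :=
    hH _ (q.map (SimpleGraph.Embedding.induce F (G := H)).toHom) hc
      (by rwa [SimpleGraph.Walk.length_map])
  rw [SimpleGraph.Walk.support_map, List.mem_map] at hu hw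
  obtain ⟨u', hu', rfl⟩ := hu
  obtain ⟨w', hw', rfl⟩ := hw
  refine ⟨u', w', hu', hw', hadj, fun hmem => hne ?_⟩
  rw [SimpleGraph.Walk.edges_map, List.mem_map]
  exact ⟨s(u', w'), hmem, rfl⟩

def liftWalk {H : SimpleGraph V} {F : Set V} :
    ∀ {a b : V} (p : H.Walk a b) (ha : a ∈ F) (hb : b ∈ F),
      (∀ x ∈ p.support, x ∈ F) → (H.induce F).Walk ⟨a, ha⟩ ⟨b, hb⟩
  | _, _, SimpleGraph.Walk.nil, _, _, _ => SimpleGraph.Walk.nil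
  | _, _, SimpleGraph.Walk.cons (v := c) h p, ha, hb, hs =>
      SimpleGraph.Walk.cons (v := (⟨c, hs c (by simp)⟩ : F)) h
        (liftWalk p (hs c (by simp)) hb (fun x hx => hs x (by simp [hx])))

lemma liftWalk_map {H : SimpleGraph V} {F : Set V} :
    ∀ {a b : V} (p : H.Walk a b) (ha : a ∈ F) (hb : b ∈ F)
      (hs : ∀ x ∈ p.support, x ∈ F),
      (liftWalk p ha hb hs).map (SimpleGraph.Embedding.induce F (G := H)).toHom = p := by
  intro a b p
  induction p with
  | nil => intro _ _ _; rfl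
  | cons h p ih => intro ha hb hs; show Walk.cons _ (Walk.map _ (liftWalk p _ hb _)) = _; rw [ih]; rfl

lemma chordal_of_all_mem {H : SimpleGraph V} {F : Set V} (hCh : Chordal (H.induce F))
    {v : V} (c : H.Walk v v) (hc : c.IsCycle) (hlen : 4 ≤ c.length)
    (hs : ∀ x ∈ c.support, x ∈ F) : HasChord H c := by
  have hv : v ∈ F := hs v c.start_mem_support
  have hmap := liftWalk_map c hv hv hs
  have hq : (liftWalk c hv hv hs).IsCycle := by
    rw [← SimpleGraph.Walk.map_isCycle_iff_of_injective
      (f := (SimpleGraph.Embedding.induce F (G := H)).toHom)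
      (by exact Subtype.val_injective), hmap]
    exact hc
  obtain ⟨u, w, hu, hw, hadj, hne⟩ := hCh _ (liftWalk c hv hv hs) hq
    (by have hl := congrArg SimpleGraph.Walk.length hmap; rw [SimpleGraph.Walk.length_map] at hl; rw [hl]; exact hlen)
  refine ⟨(u : V), (w : V), ?_, ?_, hadj, ?_⟩
  · have hl := congrArg SimpleGraph.Walk.support hmap; rw [SimpleGraph.Walk.support_map] at hl; have h2 : (u : V) ∈ List.map (SimpleGraph.Embedding.induce F (G := H)).toHom (liftWalk c hv hv hs).support := List.mem_map.mpr ⟨u, hu, rfl⟩; rw [hl] at h2; exact h2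
  · have hl := congrArg SimpleGraph.Walk.support hmap; rw [SimpleGraph.Walk.support_map] at hl; have h2 : (w : V) ∈ List.map (SimpleGraph.Embedding.induce F (G := H)).toHom (liftWalk c hv hv hs).support := List.mem_map.mpr ⟨w, hw, rfl⟩; rw [hl] at h2; exact h2
  · intro hmem
    have hl := congrArg SimpleGraph.Walk.edges hmap; rw [SimpleGraph.Walk.edges_map] at hl
    replace hmem : s((u : V), (w : V)) ∈ List.map (Sym2.map (SimpleGraph.Embedding.induce F (G := H)).toHom) (liftWalk c hv hv hs).edges := by rw [hl]; exact hmem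
    obtain ⟨e, he, hee⟩ := List.mem_map.mp hmem
    have : e = s(u, w) := Sym2.map.injective Subtype.val_injective (by exact hee)
    exact hne (this ▸ he)

/-- In a cycle of length ≥ 4 based at `x`, there is a support vertex `w ≠ x` such that
`s(x,w)` is not an edge of the cycle. -/
lemma exists_nonedge {H : SimpleGraph V} {x : V} (c : H.Walk x x) (hc : c.IsCycle)
    (hlen : 4 ≤ c.length) :
    ∃ w ∈ c.support, w ≠ x ∧ s(x, w) ∉ c.edges := by
  obtain ⟨y, h1, p, rfl⟩ := SimpleGraph.Walk.not_nil_iff.mp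
    (SimpleGraph.Walk.not_nil_iff_lt_length (p := c) |>.mpr (by omega))
  have hpn : p.support.Nodup := by simpa using hc.support_nodup
  have hplen : 3 ≤ p.length := by simp at hlen; omega
  obtain ⟨z, h2, q, hq⟩ := SimpleGraph.Walk.not_nil_iff.mp
    (SimpleGraph.Walk.not_nil_iff_lt_length (p := p.reverse) |>.mpr (by simp; omega))
  have hxq : (x :: q.support).Nodup := by
    have := hpn
    rw [← List.nodup_reverse, ← SimpleGraph.Walk.support_reverse, hq] at this
    simpa using this
  have hqlen : 2 ≤ q.length := by
    have := congrArg SimpleGraph.Walk.length hq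
    simp at this; omega
  obtain ⟨w, h3, r, hr⟩ := SimpleGraph.Walk.not_nil_iff.mp
    (SimpleGraph.Walk.not_nil_iff_lt_length (p := q.reverse) |>.mpr (by simp; omega))
  have hyr : (y :: r.support).Nodup := by
    have := hxq.of_cons
    rw [← List.nodup_reverse, ← SimpleGraph.Walk.support_reverse, hr] at this
    simpa using this
  have hrlen : 1 ≤ r.length := by
    have := congrArg SimpleGraph.Walk.length hr
    simp at this; omega
  have hwq : w ∈ q.support := by
    have : w ∈ q.reverse.support := by rw [hr]; simp
    simpa [SimpleGraph.Walk.support_reverse] using this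
  have hwp : w ∈ p.support := by
    have : w ∈ p.reverse.support := by rw [hq]; simp [hwq]
    simpa [SimpleGraph.Walk.support_reverse] using this
  have hwx : w ≠ x := by
    intro h
    exact (List.nodup_cons.mp hxq).1 (h ▸ hwq)
  have hwy : w ≠ y := by
    intro h
    have : w ∈ r.support := SimpleGraph.Walk.start_mem_support r
    exact (List.nodup_cons.mp hyr).1 (h ▸ this)
  have hwz : w ≠ z := by
    intro h
    subst h
    obtain ⟨w', h4, r', hr'⟩ := SimpleGraph.Walk.not_nil_iff.mp
      (SimpleGraph.Walk.not_nil_iff_lt_length (p := r) |>.mpr (by omega))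
    have hrn : r.support.Nodup := (List.nodup_cons.mp hyr).2
    rw [hr'] at hrn
    exact (List.nodup_cons.mp hrn).1 (SimpleGraph.Walk.end_mem_support r')
  refine ⟨w, by simp [hwp], hwx, ?_⟩
  intro hmem
  simp only [SimpleGraph.Walk.edges_cons, List.mem_cons] at hmem
  rcases hmem with hmem | hmem
  · rcases Sym2.eq_iff.mp hmem with ⟨_, h⟩ | ⟨h, h'⟩
    · exact hwy h
    · exact hwx h'
  · have : s(x, w) ∈ p.reverse.edges := by
      rw [SimpleGraph.Walk.edges_reverse, List.mem_reverse]; exact hmem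
    rw [hq] at this
    simp only [SimpleGraph.Walk.edges_cons, List.mem_cons] at this
    rcases this with h | h
    · rcases Sym2.eq_iff.mp h with ⟨_, h⟩ | ⟨h, h'⟩
      · exact hwz h
      · exact hwx h'
    · exact (List.nodup_cons.mp hxq).1 (q.fst_mem_support_of_mem_edges h)

/-- `TF` extended to `V` by joining everything outside `F` completely. -/
def extGraph (F : Set V) (TF : SimpleGraph F) : SimpleGraph V where
  Adj a b := (∃ (ha : a ∈ F) (hb : b ∈ F), TF.Adj ⟨a, ha⟩ ⟨b, hb⟩) ∨
    ((a ∉ F ∨ b ∉ F) ∧ a ≠ b)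
  symm := by
    constructor
    rintro a b (⟨ha, hb, h⟩ | ⟨h, hne⟩)
    · exact Or.inl ⟨hb, ha, h.symm⟩
    · exact Or.inr ⟨h.symm, hne.symm⟩
  loopless := by
    constructor
    rintro a (⟨_, _, h⟩ | ⟨_, hne⟩)
    · exact TF.loopless.irrefl _ h
    · exact hne rfl

lemma induce_extGraph (F : Set V) (TF : SimpleGraph F) :
    (extGraph F TF).induce F = TF := by
  ext ⟨a, ha⟩ ⟨b, hb⟩
  show (extGraph F TF).Adj a b ↔ _
  constructor
  · rintro (⟨ha', hb', h⟩ | ⟨h, _⟩)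
    · exact h
    · rcases h with h | h
      · exact absurd ha h
      · exact absurd hb h
  · intro h
    exact Or.inl ⟨ha, hb, h⟩

lemma chordal_extGraph (F : Set V) (TF : SimpleGraph F) (hTF : Chordal TF) :
    Chordal (extGraph F TF) := by
  classical
  intro v c hc hlen
  by_cases hall : ∀ x ∈ c.support, x ∈ F
  · exact chordal_of_all_mem (by rw [induce_extGraph]; exact hTF) c hc hlen hall
  · push_neg at hall
    obtain ⟨x, hx, hxF⟩ := hall
    obtain ⟨w, hw, hwx, hne⟩ := exists_nonedge (c.rotate x hx) (hc.rotate hx)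
      (by rw [← SimpleGraph.Walk.length_edges, ((c.rotate_edges x hx).perm.length_eq),
          SimpleGraph.Walk.length_edges]; exact hlen)
    refine ⟨x, w, hx, ?_, Or.inr ⟨Or.inl hxF, fun h => hwx h.symm⟩, ?_⟩
    · rcases (SimpleGraph.Walk.mem_support_iff (c.rotate x hx)).mp hw with h | h
      · exact absurd h hwx
      · have := ((c.support_rotate x hx).perm.mem_iff).mp h
        exact List.mem_of_mem_tail this
    · intro hmem
      exact hne (((c.rotate_edges x hx).perm.mem_iff).mpr hmem)

end FVaux

/-- Fomin–Villanger: every minimal triangulation `TF` of an induced subgraph `G[F]` extends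
to a minimal triangulation `TG` of `G` inducing `TF` on `F`; equivalently, every clique of
`TG` intersects `F` in a clique of `TF`. -/
theorem stmt_0 {V : Type} [Fintype V] (G : SimpleGraph V) (F : Set V)
    (TF : SimpleGraph F) (hTF : IsMinimalTriangulation (G.induce F) TF) :
    ∃ TG : SimpleGraph V, IsMinimalTriangulation G TG ∧
      TG.induce F = TF ∧
      ∀ K : Set V, TG.IsClique K → TF.IsClique {x : F | (x : V) ∈ K} := by
  classical
  set S : Set (SimpleGraph V) := {H | G ≤ H ∧ Chordal H ∧ H.induce F = TF} with hS
  have hne : S.Nonempty := by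
    refine ⟨FVaux.extGraph F TF, ?_, FVaux.chordal_extGraph F TF hTF.1.2,
      FVaux.induce_extGraph F TF⟩
    intro a b hab
    by_cases ha : a ∈ F
    · by_cases hb : b ∈ F
      · exact Or.inl ⟨ha, hb, hTF.1.1 (by exact hab)⟩
      · exact Or.inr ⟨Or.inr hb, hab.ne⟩
    · exact Or.inr ⟨Or.inl ha, hab.ne⟩
  obtain ⟨T, hT, hmin⟩ := (Finite.to_wellFoundedLT (α := SimpleGraph V)).wf.has_min S hne
  obtain ⟨hGT, hTch, hTind⟩ := hT
  have key : ∀ H' : SimpleGraph V, G ≤ H' → H' < T → ¬Chordal H' := by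
    intro H' hGH' hlt hch
    have h1 : H'.induce F ≤ TF := by rw [← hTind]; exact FVaux.induce_mono' hlt.le
    have h2 : G.induce F ≤ H'.induce F := FVaux.induce_mono' hGH'
    have h3 : H'.induce F = TF := by
      by_contra hne'
      exact hTF.2 (H'.induce F) h2 (lt_of_le_of_ne h1 hne') (FVaux.chordal_induce hch)
    exact hmin H' ⟨hGH', hch, h3⟩ hlt
  refine ⟨T, ⟨⟨hGT, hTch⟩, key⟩, hTind, ?_⟩
  intro K hK x hx y hy hxy
  have hadj : (T.induce F).Adj x y := hK hx hy (fun h => hxy (Subtype.ext h))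
  rwa [hTind] at hadj
end

section
/- Every circular-arc graph whose maximum vertex degree is at most D has treewidth at most 2D. -/
/-! ### Auxiliary lemmas for `stmt_8` -/

lemma pg_walk_edge_aux {n : ℕ} {u v : Fin n} (huv : (u:ℕ) + 1 = (v:ℕ)) :
    ∀ p : (SimpleGraph.pathGraph n).Walk u v, s(u, v) ∈ p.edges := by
  intro p
  obtain ⟨d, hd, hd1, hd2⟩ := p.exists_boundary_dart {j : Fin n | (j:ℕ) ≤ (u:ℕ)}
    (by simp) (by simp; omega)
  simp only [Set.mem_setOf_eq, not_le] at hd1 hd2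
  have hadj := d.adj
  rw [SimpleGraph.pathGraph_adj] at hadj
  have h1 : d.toProd.1 = u := by apply Fin.ext; omega
  have h2 : d.toProd.2 = v := by apply Fin.ext; omega
  have hp : d.toProd = (u, v) := Prod.ext h1 h2
  have he : d.edge = s(u, v) := by rw [SimpleGraph.Dart.edge, hp]
  rw [SimpleGraph.Walk.edges]
  exact he ▸ List.mem_map_of_mem (f := SimpleGraph.Dart.edge) hd

lemma pg_isAcyclic_aux (n : ℕ) : (SimpleGraph.pathGraph n).IsAcyclic := by
  rw [SimpleGraph.isAcyclic_iff_forall_adj_isBridge]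
  intro u v huv
  rw [SimpleGraph.pathGraph_adj] at huv
  rcases huv with h | h
  · exact SimpleGraph.isBridge_iff_adj_and_forall_walk_mem_edges.mpr
      (pg_walk_edge_aux h)
  · rw [Sym2.eq_swap]
    exact SimpleGraph.isBridge_iff_adj_and_forall_walk_mem_edges.mpr
      (pg_walk_edge_aux h)

lemma pg_isTree_aux (n : ℕ) [h : Nonempty (Fin n)] : (SimpleGraph.pathGraph n).IsTree := by
  obtain ⟨m, rfl⟩ : ∃ m, n = m + 1 :=
    Nat.exists_eq_succ_of_ne_zero (by rintro rfl; exact h.elim Fin.elim0)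
  exact ⟨SimpleGraph.pathGraph_connected m, pg_isAcyclic_aux _⟩

lemma pg_induce_connected_aux {n : ℕ} (S : Set (Fin n)) (hne : S.Nonempty)
    (hconv : ∀ a b c : Fin n, a ≤ b → b ≤ c → a ∈ S → c ∈ S → b ∈ S) :
    ((SimpleGraph.pathGraph n).induce S).Connected := by
  have key : ∀ (d : ℕ) (a b : Fin n) (ha : a ∈ S) (hb : b ∈ S), (b:ℕ) = (a:ℕ) + d →
      ((SimpleGraph.pathGraph n).induce S).Reachable ⟨a, ha⟩ ⟨b, hb⟩ := by
    intro d
    induction d with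
    | zero =>
      intro a b ha hb hab
      have : a = b := Fin.ext (by omega)
      subst this
      rfl
    | succ d ih =>
      intro a b ha hb hab
      have hlt : (a:ℕ) + 1 < n := by have := b.isLt; omega
      set a' : Fin n := ⟨(a:ℕ) + 1, hlt⟩ with ha'def
      have ha' : a' ∈ S := hconv a a' b (by simp [ha'def, Fin.le_def])
        (by simp [ha'def, Fin.le_def]; omega) ha hb
      have hadj : ((SimpleGraph.pathGraph n).induce S).Adj ⟨a, ha⟩ ⟨a', ha'⟩ := by
        simp only [SimpleGraph.comap_adj, Function.Embedding.coe_subtype]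
        exact SimpleGraph.pathGraph_adj.mpr (Or.inl rfl)
      exact hadj.reachable.trans (ih a' b ha' hb (by simp [ha'def]; omega))
  rw [SimpleGraph.connected_iff]
  refine ⟨?_, hne.to_subtype⟩
  rintro ⟨a, ha⟩ ⟨b, hb⟩
  rcases le_total (a:ℕ) (b:ℕ) with h | h
  · exact key ((b:ℕ) - (a:ℕ)) a b ha hb (by omega)
  · exact (key ((a:ℕ) - (b:ℕ)) b a hb ha (by omega)).symm

/-- Abstract construction of a path-shaped tree decomposition from a family of bags
indexed by vertices, with a real "key" controlling convexity along a sorted order. -/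
lemma hasTDW_of_bags {V : Type} [Fintype V] [Nonempty V] (G : SimpleGraph V) (k : ℕ)
    (B : V → Set V) (key : V → ℝ)
    (hmem : ∀ w, w ∈ B w)
    (hedge : ∀ u v, G.Adj u v → ∃ w, u ∈ B w ∧ v ∈ B w)
    (hconv : ∀ w u₁ u₂ u₃, key u₁ ≤ key u₂ → key u₂ ≤ key u₃ →
      w ∈ B u₁ → w ∈ B u₃ → w ∈ B u₂)
    (hsize : ∀ w, (B w).ncard ≤ k + 1) :
    HasTreeDecompOfWidth G k := by
  classical
  set n := Fintype.card V with hn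
  have hne : Nonempty (Fin n) := (Fintype.equivFin V).symm.nonempty
  let e0 : Fin n ≃ V := (Fintype.equivFin V).symm
  let σ := Tuple.sort (key ∘ e0)
  let e : Fin n ≃ V := (σ : Equiv.Perm (Fin n)).trans e0
  have hmono : Monotone (key ∘ e0 ∘ σ) := Tuple.monotone_sort (key ∘ e0)
  have hkey : ∀ i j : Fin n, i ≤ j → key (e i) ≤ key (e j) := fun i j hij => hmono hij
  refine ⟨Fin n, SimpleGraph.pathGraph n, fun j => B (e j),
    ⟨pg_isTree_aux n, ?_, ?_, ?_⟩, fun j => hsize _⟩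
  · intro v
    exact ⟨e.symm v, by simpa using hmem v⟩
  · intro u v huv
    obtain ⟨w, hu, hv⟩ := hedge u v huv
    exact ⟨e.symm w, by simpa using hu, by simpa using hv⟩
  · intro v
    apply pg_induce_connected_aux
    · exact ⟨e.symm v, by simpa using hmem v⟩
    · intro a b c hab hbc ha hc
      exact hconv v (e a) (e b) (e c) (hkey a b hab) (hkey b c hbc) ha hc

lemma circleMap_per_aux (θ : ℝ) (m : ℤ) :
    circleMap 0 1 (θ + 2 * Real.pi * m) = circleMap 0 1 θ := by
  have := ((periodic_circleMap 0 1).int_mul m) θ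
  rw [← this]; ring_nf

lemma circleMap_inj_aux (α β : ℝ) (h : circleMap 0 1 α = circleMap 0 1 β) :
    ∃ m : ℤ, α = β + 2 * Real.pi * m := by
  have hα : circleMap 0 1 α = Complex.exp (α * Complex.I) := by simp [circleMap]
  have hβ : circleMap 0 1 β = Complex.exp (β * Complex.I) := by simp [circleMap]
  rw [hα, hβ, Complex.exp_eq_exp_iff_exists_int] at h
  obtain ⟨m, hm⟩ := h
  refine ⟨m, ?_⟩
  have : (α : ℂ) = (β : ℂ) + 2 * Real.pi * m := by
    have h2 : (α : ℂ) * Complex.I = ((β : ℂ) + 2 * Real.pi * m) * Complex.I := by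
      rw [hm]; ring
    exact mul_right_cancel₀ Complex.I_ne_zero h2
  exact_mod_cast this

/-- Every circular-arc graph of maximum degree at most `D` has treewidth at most `2D`. -/
theorem stmt_8 {V : Type} [Fintype V] (G : SimpleGraph V) (D : ℕ)
    (hG : IsCircularArcGraph G) (hD : ∀ v : V, (G.neighborSet v).ncard ≤ D) :
    treewidth G ≤ 2 * D := by
  classical
  have hTDW : HasTreeDecompOfWidth G (2 * D) := by
    cases isEmpty_or_nonempty V with
    | inl hV =>
      refine ⟨Unit, ⊥, fun _ => ∅, ⟨⟨?_, SimpleGraph.isAcyclic_bot⟩,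
        fun v => (IsEmpty.false v).elim, fun u v h => (IsEmpty.false u).elim,
        fun v => (IsEmpty.false v).elim⟩, fun _ => by simp⟩
      rw [SimpleGraph.connected_iff]
      exact ⟨fun u v => by cases u; cases v; exact SimpleGraph.Reachable.refl _, ⟨()⟩⟩
    | inr hV =>
      obtain ⟨s, t, hst, hadj⟩ := hG
      set Arc : V → Set ℂ := fun v => circleMap 0 1 '' Set.Icc (s v) (t v) with hArcdef
      set Cov : ℂ → Set V := fun z => {w | z ∈ Arc w} with hCovdef
      have hπ2 : (0:ℝ) < 2 * Real.pi := by positivity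
      have hCovClique : ∀ (z : ℂ) (u v : V), z ∈ Arc u → z ∈ Arc v → u ≠ v → G.Adj u v := by
        intro z u v hu hv hne
        exact (hadj u v hne).mpr ⟨z, hu, hv⟩
      have hCovCard : ∀ (z : ℂ) (v : V), z ∈ Arc v → (Cov z).ncard ≤ D + 1 := by
        intro z v hv
        have hsub : Cov z ⊆ insert v (G.neighborSet v) := by
          intro w hw
          by_cases hwv : w = v
          · exact hwv ▸ Set.mem_insert _ _
          · exact Set.mem_insert_iff.mpr (Or.inr (hCovClique z v w hv hw (Ne.symm hwv)))
        calc (Cov z).ncard ≤ (insert v (G.neighborSet v)).ncard :=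
              Set.ncard_le_ncard hsub (Set.toFinite _)
          _ ≤ (G.neighborSet v).ncard + 1 := Set.ncard_insert_le _ _
          _ ≤ D + 1 := by have := hD v; omega
      by_cases hc : ∃ x : ℝ, (Cov (circleMap 0 1 x)).ncard ≤ D
      · -- Case A : some point of the circle is covered by at most D arcs
        obtain ⟨x, hxD⟩ := hc
        set A : Set V := Cov (circleMap 0 1 x) with hAdef
        set kk : V → ℤ := fun v => ⌊(s v - x) / (2 * Real.pi)⌋ with hkkdef
        set L : V → ℝ := fun v => s v - x - 2 * Real.pi * kk v with hLdef
        set R : V → ℝ := fun v => t v - x - 2 * Real.pi * kk v with hRdef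
        have hmemArc : ∀ (v : V) (θ : ℝ), θ ∈ Set.Icc (s v) (t v) →
            circleMap 0 1 θ ∈ Arc v := fun v θ h => ⟨θ, h, rfl⟩
        have hL0 : ∀ v, 0 ≤ L v := by
          intro v
          have h1 : ((kk v : ℝ)) ≤ (s v - x) / (2 * Real.pi) := Int.floor_le _
          have h2 : ((kk v : ℝ)) * (2 * Real.pi) ≤ s v - x := (le_div_iff₀ hπ2).mp h1
          simp only [hLdef]
          nlinarith
        have hL2 : ∀ v, L v < 2 * Real.pi := by
          intro v
          have h1 : (s v - x) / (2 * Real.pi) < (kk v : ℝ) + 1 := Int.lt_floor_add_one _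
          have h2 : s v - x < ((kk v : ℝ) + 1) * (2 * Real.pi) := (div_lt_iff₀ hπ2).mp h1
          simp only [hLdef]
          nlinarith
        have hLR : ∀ v, L v ≤ R v := by
          intro v
          simp only [hLdef, hRdef]
          have := hst v
          linarith
        have hLpos : ∀ v, v ∉ A → 0 < L v := by
          intro v hv
          rcases (hL0 v).lt_or_eq with h | h
          · exact h
          · exfalso
            apply hv
            have hs : s v = x + 2 * Real.pi * kk v := by
              simp only [hLdef] at h
              linarith
            have : circleMap 0 1 (s v) = circleMap 0 1 x := by
              rw [hs]; exact circleMap_per_aux x (kk v)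
            exact Set.mem_setOf_eq ▸ (this ▸ hmemArc v (s v) ⟨le_rfl, hst v⟩)
        have hRlt : ∀ v, v ∉ A → R v < 2 * Real.pi := by
          intro v hv
          by_contra h
          push_neg at h
          apply hv
          have h1 : s v ≤ x + 2 * Real.pi * ((kk v : ℝ) + 1) := by
            have := hL2 v
            simp only [hLdef] at this
            linarith
          have h2 : x + 2 * Real.pi * ((kk v : ℝ) + 1) ≤ t v := by
            simp only [hRdef] at h
            linarith
          have h3 : circleMap 0 1 (x + 2 * Real.pi * ((kk v : ℝ) + 1)) = circleMap 0 1 x := by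
            have h4 := circleMap_per_aux x (kk v + 1)
            have h5 : x + 2 * Real.pi * ((kk v : ℝ) + 1) = x + 2 * Real.pi * ((kk v + 1 : ℤ) : ℝ) := by
              push_cast; ring
            rw [h5]
            exact h4
          exact Set.mem_setOf_eq ▸ (h3 ▸ hmemArc v _ ⟨h1, h2⟩)
        have hPoint : ∀ (v : V) (c : ℝ), L v ≤ c → c ≤ R v →
            circleMap 0 1 (x + c) ∈ Arc v := by
          intro v c h1 h2
          have hIcc : x + c + 2 * Real.pi * kk v ∈ Set.Icc (s v) (t v) := by
            simp only [hLdef] at h1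
            simp only [hRdef] at h2
            constructor <;> [linarith; linarith]
          have heq : circleMap 0 1 (x + c + 2 * Real.pi * kk v) = circleMap 0 1 (x + c) :=
            circleMap_per_aux (x + c) (kk v)
          exact heq ▸ hmemArc v _ hIcc
        have hCommon : ∀ u v : V, u ∉ A → v ∉ A → G.Adj u v →
            ∃ c : ℝ, L u ≤ c ∧ c ≤ R u ∧ L v ≤ c ∧ c ≤ R v := by
          intro u v hu hv huv
          obtain ⟨z, hzu, hzv⟩ := (hadj u v huv.ne).mp huv
          obtain ⟨θu, hθu, hθueq⟩ := hzu
          obtain ⟨θv, hθv, hθveq⟩ := hzv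
          set cu : ℝ := θu - x - 2 * Real.pi * kk u with hcudef
          set cv : ℝ := θv - x - 2 * Real.pi * kk v with hcvdef
          have hcu1 : L u ≤ cu := by simp only [hLdef, hcudef]; have := hθu.1; linarith
          have hcu2 : cu ≤ R u := by simp only [hRdef, hcudef]; have := hθu.2; linarith
          have hcv1 : L v ≤ cv := by simp only [hLdef, hcvdef]; have := hθv.1; linarith
          have hcv2 : cv ≤ R v := by simp only [hRdef, hcvdef]; have := hθv.2; linarith
          have hb1 : 0 < cu := lt_of_lt_of_le (hLpos u hu) hcu1
          have hb2 : cu < 2 * Real.pi := lt_of_le_of_lt hcu2 (hRlt u hu)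
          have hb3 : 0 < cv := lt_of_lt_of_le (hLpos v hv) hcv1
          have hb4 : cv < 2 * Real.pi := lt_of_le_of_lt hcv2 (hRlt v hv)
          obtain ⟨m, hm⟩ := circleMap_inj_aux θu θv (hθueq.trans hθveq.symm)
          set m' : ℤ := m - kk u + kk v with hm'def
          have h1 : cu - cv = 2 * Real.pi * (m' : ℝ) := by
            simp only [hcudef, hcvdef, hm'def]
            push_cast
            rw [hm]
            ring
          have hm0 : m' = 0 := by
            by_contra h0
            rcases lt_or_gt_of_ne h0 with h | h
            · have hz : m' ≤ -1 := by omega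
              have : (m' : ℝ) ≤ -1 := by exact_mod_cast hz
              nlinarith
            · have : (1:ℝ) ≤ (m' : ℝ) := by exact_mod_cast h
              nlinarith
          have hcucv : cu = cv := by
            rw [hm0] at h1
            push_cast at h1
            linarith
          exact ⟨cu, hcu1, hcu2, hcucv ▸ hcv1, hcucv ▸ hcv2⟩
        -- build the decomposition
        set key : V → ℝ := fun w => if w ∈ A then 0 else L w with hkeydef
        set B : V → Set V := fun w =>
          A ∪ {v | v ∉ A ∧ L v ≤ key w ∧ key w ≤ R v} with hBdef
        have hAsubB : ∀ w, A ⊆ B w := fun w => Set.subset_union_left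
        have hmem : ∀ w, w ∈ B w := by
          intro w
          by_cases hw : w ∈ A
          · exact hAsubB w hw
          · refine Set.mem_union_right _ ⟨hw, ?_, ?_⟩
            · simp only [hkeydef, if_neg hw]; exact le_rfl
            · simp only [hkeydef, if_neg hw]; exact hLR w
        apply hasTDW_of_bags G (2 * D) B key hmem
        · -- edges
          intro u v huv
          by_cases hu : u ∈ A
          · exact ⟨v, hAsubB v hu, hmem v⟩
          · by_cases hv : v ∈ A
            · exact ⟨u, hmem u, hAsubB u hv⟩
            · obtain ⟨c, h1, h2, h3, h4⟩ := hCommon u v hu hv huv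
              rcases le_total (L u) (L v) with hLL | hLL
              · refine ⟨v, Set.mem_union_right _ ⟨hu, ?_, ?_⟩, hmem v⟩
                · simp only [hkeydef, if_neg hv]; exact hLL
                · simp only [hkeydef, if_neg hv]; linarith
              · refine ⟨u, hmem u, Set.mem_union_right _ ⟨hv, ?_, ?_⟩⟩
                · simp only [hkeydef, if_neg hu]; exact hLL
                · simp only [hkeydef, if_neg hu]; linarith
        · -- convexity
          intro w u₁ u₂ u₃ h12 h23 hw1 hw3
          rcases hw1 with hw1 | hw1
          · exact hAsubB u₂ hw1
          · rcases hw3 with hw3 | hw3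
            · exact hAsubB u₂ hw3
            · exact Set.mem_union_right _ ⟨hw1.1, le_trans hw1.2.1 h12,
                le_trans h23 hw3.2.2⟩
        · -- sizes
          intro w
          have hbound : (B w).ncard ≤ A.ncard + ({v | v ∉ A ∧ L v ≤ key w ∧ key w ≤ R v}).ncard :=
            Set.ncard_union_le _ _
          by_cases hw : w ∈ A
          · have hempty : {v | v ∉ A ∧ L v ≤ key w ∧ key w ≤ R v} = ∅ := by
              ext v
              simp only [Set.mem_setOf_eq, Set.mem_empty_iff_false, iff_false, not_and]
              intro hv h1
              exfalso
              simp only [hkeydef, if_pos hw] at h1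
              exact absurd h1 (not_le.mpr (hLpos v hv))
            rw [hempty] at hbound
            simp only [Set.ncard_empty] at hbound
            omega
          · have hwpt : circleMap 0 1 (x + L w) ∈ Arc w := hPoint w (L w) le_rfl (hLR w)
            have hsub : {v | v ∉ A ∧ L v ≤ key w ∧ key w ≤ R v} ⊆
                Cov (circleMap 0 1 (x + L w)) := by
              intro v hv
              simp only [hkeydef, if_neg hw] at hv
              exact hPoint v (L w) hv.2.1 hv.2.2
            have h2 : ({v | v ∉ A ∧ L v ≤ key w ∧ key w ≤ R v}).ncard ≤ D + 1 :=
              le_trans (Set.ncard_le_ncard hsub (Set.toFinite _))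
                (hCovCard _ w hwpt)
            omega
      · -- Case B : every point of the circle is covered by more than D arcs
        push_neg at hc
        set Nc : V → Set V := fun v => insert v (G.neighborSet v) with hNcdef
        have hmemNc : ∀ v, v ∈ Nc v := fun v => Set.mem_insert _ _
        have hNcCard : ∀ v, (Nc v).ncard ≤ D + 1 := by
          intro v
          calc (Nc v).ncard ≤ (G.neighborSet v).ncard + 1 := Set.ncard_insert_le _ _
            _ ≤ D + 1 := by have := hD v; omega
        have hAdjNc : ∀ u v, G.Adj u v → Nc u = Nc v := by
          intro u v huv
          obtain ⟨z, hzu, hzv⟩ := (hadj u v huv.ne).mp huv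
          obtain ⟨θ, hθ, hθeq⟩ := hzu
          have hcard : D + 1 ≤ (Cov z).ncard := by
            have := hc θ
            rw [hθeq] at this
            omega
          have hCovNc : ∀ w : V, z ∈ Arc w → Cov z = Nc w := by
            intro w hw
            refine Set.eq_of_subset_of_ncard_le ?_ ?_ (Set.toFinite _)
            · intro y hy
              by_cases hyw : y = w
              · exact hyw ▸ hmemNc w
              · exact Set.mem_insert_iff.mpr (Or.inr (hCovClique z w y hw hy (Ne.symm hyw)))
            · exact le_trans (hNcCard w) hcard
          rw [← hCovNc u ⟨θ, hθ, hθeq⟩, ← hCovNc v hzv]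
        have hNcNc : ∀ u v, v ∈ Nc u → Nc v = Nc u := by
          intro u v hv
          rcases Set.mem_insert_iff.mp hv with h | h
          · rw [h]
          · exact (hAdjNc u v h).symm
        set idx : V → ℕ := fun v => ((Fintype.equivFin V) v : ℕ) with hidxdef
        have hidxinj : Function.Injective idx := by
          intro a b hab
          exact (Fintype.equivFin V).injective (Fin.val_injective hab)
        set key : V → ℝ := fun w => ((sInf (idx '' Nc w) : ℕ) : ℝ) with hkeydef
        have hkeymem : ∀ w, ∃ y ∈ Nc w, idx y = sInf (idx '' Nc w) := by
          intro w
          have hne2 : (idx '' Nc w).Nonempty := ⟨idx w, Set.mem_image_of_mem idx (hmemNc w)⟩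
          obtain ⟨y, hy, hyeq⟩ := Nat.sInf_mem hne2
          exact ⟨y, hy, hyeq⟩
        have hkeyNc : ∀ u v, key u = key v → Nc u = Nc v := by
          intro u v huv
          have h1 : sInf (idx '' Nc u) = sInf (idx '' Nc v) := by
            simp only [hkeydef] at huv
            exact_mod_cast huv
          obtain ⟨yu, hyu, hyueq⟩ := hkeymem u
          obtain ⟨yv, hyv, hyveq⟩ := hkeymem v
          have : yu = yv := hidxinj (by rw [hyueq, hyveq, h1])
          rw [← hNcNc u yu hyu, this, hNcNc v yv hyv]
        have hNckey : ∀ u v, Nc u = Nc v → key u = key v := by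
          intro u v h
          simp only [hkeydef, h]
        apply hasTDW_of_bags G (2 * D) Nc key hmemNc
        · intro u v huv
          exact ⟨u, hmemNc u, Set.mem_insert_iff.mpr (Or.inr huv)⟩
        · intro w u₁ u₂ u₃ h12 h23 hw1 hw3
          have e1 : key u₁ = key w := hNckey u₁ w (hNcNc u₁ w hw1).symm
          have e3 : key u₃ = key w := hNckey u₃ w (hNcNc u₃ w hw3).symm
          have e2 : key u₂ = key w := le_antisymm (e3 ▸ h23) (e1 ▸ h12)
          have : Nc u₂ = Nc w := hkeyNc u₂ w e2
          rw [this]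
          exact hmemNc w
        · intro w
          have := hNcCard w
          omega
  unfold treewidth
  exact Nat.sInf_le hTDW
end

section
/- For every graph H, every circular-arc graph that does not contain H as a minor has treewidth at most 3·|V(H)|. -/
open Real SimpleGraph

private lemma tpp : (0:ℝ) < 2 * π := Real.two_pi_pos

/-- circleMap equality iff angles differ by multiple of 2π -/
lemma cm_eq_iff {x y : ℝ} : circleMap 0 1 x = circleMap 0 1 y ↔ ∃ n : ℤ, x = y + n * (2*π) := by
  simp only [circleMap, zero_add, one_mul, Complex.ofReal_one]
  rw [Complex.exp_eq_exp_iff_exists_int]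
  constructor
  · rintro ⟨n, hn⟩
    refine ⟨n, ?_⟩
    have h2 : ((y : ℂ) + n * (2*π)) * Complex.I = (x:ℝ) * Complex.I := by
      rw [hn]; ring
    have h3 : ((y : ℂ) + n * (2*π)) = (x:ℝ) := mul_right_cancel₀ Complex.I_ne_zero h2
    have := h3.symm
    push_cast at this ⊢
    exact_mod_cast this
  · rintro ⟨n, hn⟩
    refine ⟨n, ?_⟩
    rw [hn]; push_cast; ring

lemma mod_sub (a b : ℝ) : b - toIcoMod tpp a b = (toIcoDiv tpp a b : ℝ) * (2*π) := by
  have := self_sub_toIcoMod tpp a b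
  rwa [zsmul_eq_mul] at this

lemma mod_lb (a b : ℝ) : a ≤ toIcoMod tpp a b := (toIcoMod_mem_Ico tpp a b).1
lemma mod_ub (a b : ℝ) : toIcoMod tpp a b < a + 2*π := (toIcoMod_mem_Ico tpp a b).2

/-- Lemma A: membership of a circle point in an arc. -/
lemma mem_arc_iff {a t b : ℝ} (h : a ≤ t) :
    circleMap 0 1 b ∈ circleMap 0 1 '' Set.Icc a t ↔ toIcoMod tpp a b ≤ t := by
  constructor
  · rintro ⟨θ, hθ, heq⟩
    obtain ⟨n, hn⟩ := cm_eq_iff.mp heq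
    -- θ = b + n*2π, θ ∈ [a,t]
    have h1 : toIcoMod tpp a θ = toIcoMod tpp a b := by
      rw [hn]
      have := toIcoMod_add_zsmul tpp a b n
      rwa [zsmul_eq_mul] at this
    have h2 := mod_sub a θ
    have h3 := mod_lb a θ
    -- toIcoMod a θ ≤ θ : else toIcoDiv ≤ -1
    have h4 : toIcoMod tpp a θ ≤ θ := by
      by_contra hcon
      push_neg at hcon
      have hd : (toIcoDiv tpp a θ : ℝ) * (2*π) < 0 := by linarith
      have hd2 : toIcoDiv tpp a θ < 0 := by
        by_contra hd3
        push_neg at hd3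
        have : (0:ℝ) ≤ (toIcoDiv tpp a θ : ℝ) := by exact_mod_cast hd3
        nlinarith [Real.two_pi_pos]
      have hd4 : toIcoDiv tpp a θ ≤ -1 := by omega
      have : (toIcoDiv tpp a θ : ℝ) ≤ -1 := by exact_mod_cast hd4
      have h5 := mod_ub a θ
      have h6 : θ - toIcoMod tpp a θ ≤ -(2*π) := by nlinarith [Real.two_pi_pos]
      have := hθ.1
      linarith
    linarith [hθ.2, h1 ▸ h4]
  · intro hm
    refine ⟨toIcoMod tpp a b, ⟨mod_lb a b, hm⟩, ?_⟩
    rw [cm_eq_iff]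
    exact ⟨-toIcoDiv tpp a b, by push_cast; linarith [mod_sub a b]⟩

/-- Lemma B: crossing arcs. -/
lemma arcs_cross {s1 t1 s2 t2 : ℝ} (h1 : s1 ≤ t1) (h2 : s2 ≤ t2)
    (hne : (circleMap 0 1 '' Set.Icc s1 t1 ∩ circleMap 0 1 '' Set.Icc s2 t2).Nonempty) :
    toIcoMod tpp s2 s1 ≤ t2 ∨ toIcoMod tpp s1 s2 ≤ t1 := by
  by_contra hcon
  push_neg at hcon
  obtain ⟨ha, hb⟩ := hcon
  obtain ⟨z, ⟨θ1, hθ1, hz1⟩, ⟨θ2, hθ2, hz2⟩⟩ := hne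
  obtain ⟨k, hk⟩ := cm_eq_iff.mp (hz1.trans hz2.symm)
  set a := toIcoMod tpp s2 s1 with hadef
  set b := toIcoMod tpp s1 s2 with hbdef
  have hsa := mod_sub s2 s1   -- s1 - a = d1 * 2π
  have hsb := mod_sub s1 s2
  set d1 := toIcoDiv tpp s2 s1
  set d2 := toIcoDiv tpp s1 s2
  have hal := mod_lb s2 s1
  have hau := mod_ub s2 s1
  have hbl := mod_lb s1 s2
  have hbu := mod_ub s1 s2
  -- sum = (a - s2) + (b - s1) = -(d1+d2)*2π ∈ [0, 4π) so -(d1+d2) ∈ {0,1}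
  have hsum : (a - s2) + (b - s1) = (-(d1 + d2) : ℤ) * (2*π) := by push_cast; linarith
  have hm1 : -(d1+d2) ≤ 1 := by
    by_contra hx
    push_neg at hx
    have hx2 : (2:ℤ) ≤ -(d1+d2) := by omega
    have : (2:ℝ) ≤ ((-(d1+d2) : ℤ) : ℝ) := by exact_mod_cast hx2
    nlinarith [Real.two_pi_pos]
  have hsumle : (a - s2) + (b - s1) ≤ 2*π := by
    have : ((-(d1+d2) : ℤ) : ℝ) ≤ 1 := by exact_mod_cast hm1
    nlinarith [Real.two_pi_pos]
  -- y - x - δ = (d1 - k) * 2π with y = θ2 - s2, x = θ1 - s1, δ = a - s2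
  have hkey : (θ2 - s2) - (θ1 - s1) - (a - s2) = ((d1 - k : ℤ) : ℝ) * (2*π) := by
    push_cast; linarith
  have hxlt : θ1 - s1 < b - s1 := by linarith [hθ1.2]
  have hylt : θ2 - s2 < a - s2 := by linarith [hθ2.2]
  have hx0 : 0 ≤ θ1 - s1 := by linarith [hθ1.1]
  have hy0 : 0 ≤ θ2 - s2 := by linarith [hθ2.1]
  have hlt0 : ((d1 - k : ℤ) : ℝ) * (2*π) < 0 := by rw [← hkey]; linarith
  have hgt : -(2*π) < ((d1 - k : ℤ) : ℝ) * (2*π) := by rw [← hkey]; linarith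
  have c1 : (d1 - k : ℤ) < 0 := by
    by_contra hx; push_neg at hx
    have : (0:ℝ) ≤ ((d1 - k : ℤ) : ℝ) := by exact_mod_cast hx
    nlinarith [Real.two_pi_pos]
  have c2 : (-1 : ℤ) < d1 - k := by
    by_contra hx; push_neg at hx
    have : ((d1 - k : ℤ) : ℝ) ≤ -1 := by exact_mod_cast hx
    nlinarith [Real.two_pi_pos]
  omega

lemma int_mul_eq_zero {n : ℤ} (h1 : -(2*π) < (n:ℝ)*(2*π)) (h2 : (n:ℝ)*(2*π) < 2*π) :
    (n:ℝ)*(2*π) = 0 := by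
  have hn0 : n = 0 := by
    by_contra hx
    rcases lt_or_gt_of_ne hx with hlt | hgt
    · have hn1 : n ≤ -1 := by omega
      have : (n:ℝ) ≤ -1 := by exact_mod_cast hn1
      nlinarith [Real.two_pi_pos]
    · have hn1 : (1:ℤ) ≤ n := by omega
      have : (1:ℝ) ≤ (n:ℝ) := by exact_mod_cast hn1
      nlinarith [Real.two_pi_pos]
  rw [hn0]; push_cast; ring

/-- Lemma C: order-convexity of arc membership among start points, for arcs avoiding `p`. -/
lemma arc_convex {p sv tv x1 x2 x3 : ℝ} (hK : tv < toIcoMod tpp sv p)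
    (h12 : toIcoMod tpp p x1 ≤ toIcoMod tpp p x2)
    (h23 : toIcoMod tpp p x2 ≤ toIcoMod tpp p x3)
    (m1 : toIcoMod tpp sv x1 ≤ tv) (m3 : toIcoMod tpp sv x3 ≤ tv) :
    toIcoMod tpp sv x2 ≤ tv := by
  set gp := toIcoMod tpp sv p with hgp
  have hdp := mod_sub sv p
  have hgpl := mod_lb sv p
  have hgpu := mod_ub sv p
  set c1 := toIcoMod tpp p x1; set c2 := toIcoMod tpp p x2; set c3 := toIcoMod tpp p x3
  set g1 := toIcoMod tpp sv x1; set g2 := toIcoMod tpp sv x2; set g3 := toIcoMod tpp sv x3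
  have hdc1 := mod_sub p x1; have hdc2 := mod_sub p x2; have hdc3 := mod_sub p x3
  have hdg1 := mod_sub sv x1; have hdg2 := mod_sub sv x2; have hdg3 := mod_sub sv x3
  have hc1l := mod_lb p x1; have hc1u := mod_ub p x1
  have hc2l := mod_lb p x2; have hc2u := mod_ub p x2
  have hc3l := mod_lb p x3; have hc3u := mod_ub p x3
  have hg1l := mod_lb sv x1; have hg1u := mod_ub sv x1
  have hg2l := mod_lb sv x2; have hg2u := mod_ub sv x2
  have hg3l := mod_lb sv x3; have hg3u := mod_ub sv x3
  -- λ i := c i - p + gp - 2π ; claim λ1 = g1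
  have key1 : c1 - p + gp - 2*π - g1
      = ((toIcoDiv tpp sv x1 - toIcoDiv tpp p x1 - toIcoDiv tpp sv p - 1 : ℤ) : ℝ) * (2*π) := by
    push_cast; linarith
  have lam1 : c1 - p + gp - 2*π = g1 := by
    have := int_mul_eq_zero (n := toIcoDiv tpp sv x1 - toIcoDiv tpp p x1 - toIcoDiv tpp sv p - 1)
      (by rw [← key1]; linarith) (by rw [← key1]; linarith)
    linarith [key1, this]
  have key3 : c3 - p + gp - 2*π - g3
      = ((toIcoDiv tpp sv x3 - toIcoDiv tpp p x3 - toIcoDiv tpp sv p - 1 : ℤ) : ℝ) * (2*π) := by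
    push_cast; linarith
  have lam3 : c3 - p + gp - 2*π = g3 := by
    have := int_mul_eq_zero (n := toIcoDiv tpp sv x3 - toIcoDiv tpp p x3 - toIcoDiv tpp sv p - 1)
      (by rw [← key3]; linarith) (by rw [← key3]; linarith)
    linarith [key3, this]
  -- λ2 ∈ [g1, g3] ⊆ [sv, tv]
  have key2 : c2 - p + gp - 2*π - g2
      = ((toIcoDiv tpp sv x2 - toIcoDiv tpp p x2 - toIcoDiv tpp sv p - 1 : ℤ) : ℝ) * (2*π) := by
    push_cast; linarith
  have lam2 : c2 - p + gp - 2*π = g2 := by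
    have := int_mul_eq_zero (n := toIcoDiv tpp sv x2 - toIcoDiv tpp p x2 - toIcoDiv tpp sv p - 1)
      (by rw [← key2]; linarith) (by rw [← key2]; linarith)
    linarith [key2, this]
  linarith

lemma pg_no_cycle_at_max {n : ℕ} {m : Fin n} (c : (pathGraph n).Walk m m)
    (hmax : ∀ x ∈ c.support, x ≤ m) : ¬ c.IsCycle := by
  intro hc
  cases c with
  | nil => exact Walk.IsCycle.not_of_nil hc
  | @cons _ x _ h q =>
    rw [Walk.cons_isCycle_iff] at hc
    obtain ⟨hq, he⟩ := hc
    obtain ⟨y, h', q', hqr⟩ := Walk.exists_eq_cons_of_ne h.ne q.reverse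
    have hyq : s(m, y) ∈ q.edges := by
      have : s(m, y) ∈ q.reverse.edges := by
        rw [hqr, Walk.edges_cons]; exact List.mem_cons_self
      rwa [Walk.edges_reverse, List.mem_reverse] at this
    have hy_supp : y ∈ q.support := Walk.snd_mem_support_of_mem_edges q hyq
    have hx_supp : x ∈ q.support := Walk.start_mem_support q
    have hxle : x ≤ m := hmax x (by rw [Walk.support_cons]; exact List.mem_cons_of_mem _ hx_supp)
    have hyle : y ≤ m := hmax y (by rw [Walk.support_cons]; exact List.mem_cons_of_mem _ hy_supp)
    have hx1 : (x : ℕ) + 1 = m := by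
      rcases pathGraph_adj.mp h with h1 | h1
      · omega
      · have := Fin.le_def.mp hxle; omega
    have hy1 : (y : ℕ) + 1 = m := by
      rcases pathGraph_adj.mp h' with h1 | h1
      · omega
      · have := Fin.le_def.mp hyle; omega
    have hxy : x = y := Fin.ext (by omega)
    subst hxy
    exact he hyq

lemma pathGraph_isAcyclic (n : ℕ) : (pathGraph n).IsAcyclic := by
  intro v c hc
  have hlen : 0 < c.support.length := List.length_pos_iff.mpr (Walk.support_ne_nil c)
  have hm : c.support.maximum_of_length_pos hlen ∈ c.support :=
    List.maximum_of_length_pos_mem hlen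
  set m := c.support.maximum_of_length_pos hlen with hmdef
  have hmax : ∀ x ∈ c.support, x ≤ m := fun x hx =>
    List.le_maximum_of_length_pos_of_mem hx hlen
  have hc' := hc.rotate hm
  refine pg_no_cycle_at_max (c.rotate m hm) ?_ hc'
  intro x hx
  have hrot := Walk.support_rotate c m hm
  rw [Walk.support_eq_cons (c.rotate m hm), List.mem_cons] at hx
  rcases hx with hx1 | hx2
  · exact le_of_eq hx1
  · exact hmax x (List.mem_of_mem_tail (hrot.mem_iff.mp hx2))

lemma induce_convex_connected {n : ℕ} (S : Set (Fin n)) (hne : S.Nonempty)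
    (hconv : ∀ i j k : Fin n, i ≤ j → j ≤ k → i ∈ S → k ∈ S → j ∈ S) :
    ((pathGraph n).induce S).Connected := by
  haveI : Nonempty ↥S := hne.to_subtype
  have key : ∀ k : ℕ, ∀ a b : ↥S, a.1 ≤ b.1 → (b.1 : ℕ) - (a.1 : ℕ) = k →
      ((pathGraph n).induce S).Reachable a b := by
    intro k
    induction k with
    | zero =>
      intro a b hab h0
      have hle := Fin.le_def.mp hab
      have : a = b := Subtype.ext (Fin.ext (by omega))
      rw [this]
    | succ k ih =>
      intro a b hab hk
      have hle := Fin.le_def.mp hab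
      have hlt : (a.1 : ℕ) < b.1 := by omega
      have hlt_n : (a.1 : ℕ) + 1 < n := lt_of_le_of_lt hlt b.1.isLt
      set a' : Fin n := ⟨(a.1 : ℕ) + 1, hlt_n⟩ with ha'def
      have ha'S : a' ∈ S := hconv a.1 a' b.1 (Fin.le_def.mpr (by simp [ha'def]))
        (Fin.le_def.mpr (by simp [ha'def]; omega)) a.2 b.2
      have hadj : ((pathGraph n).induce S).Adj a ⟨a', ha'S⟩ := by
        simp only [comap_adj, Function.Embedding.coe_subtype]
        exact pathGraph_adj.mpr (Or.inl rfl)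
      exact hadj.reachable.trans (ih ⟨a', ha'S⟩ b (Fin.le_def.mpr (by simp [ha'def]; omega))
        (by simp [ha'def]; omega))
  constructor
  intro a b
  rcases le_total a.1 b.1 with hab | hba
  · exact key _ a b hab rfl
  · exact (key _ b a hba rfl).symm

lemma minor_of_isEmpty {W V : Type} [IsEmpty W] (H : SimpleGraph W) (G : SimpleGraph V) :
    IsMinorOf H G :=
  ⟨fun w => isEmptyElim w, fun w => isEmptyElim w, fun w => isEmptyElim w,
    fun w => isEmptyElim w, fun w => isEmptyElim w⟩

lemma minor_of_big_clique {W V : Type} [Fintype W] [Fintype V] (H : SimpleGraph W)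
    (G : SimpleGraph V) {S : Set V} (hS : G.IsClique S) (hcard : Fintype.card W ≤ S.ncard) :
    IsMinorOf H G := by
  have hfin : S.Finite := Set.toFinite S
  haveI := hfin.fintype
  have hc : Fintype.card W ≤ Fintype.card S := by
    rwa [Set.ncard_eq_toFinset_card', Set.toFinset_card] at hcard
  obtain ⟨f⟩ := Function.Embedding.nonempty_of_card_le hc
  refine ⟨fun w => {(f w : V)}, fun w => ⟨_, rfl⟩, ?_, ?_, ?_⟩
  · intro w
    haveI : Nonempty ↥({(f w : V)} : Set V) := ⟨⟨_, rfl⟩⟩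
    refine ⟨fun a b => ?_⟩
    have : a = b := Subtype.ext (a.2.trans b.2.symm)
    rw [this]
  · intro w1 w2 hne
    rw [Set.disjoint_singleton]
    intro hcol
    exact hne (f.injective (Subtype.coe_injective hcol))
  · intro w1 w2 hadj
    refine ⟨f w1, rfl, f w2, rfl, hS (f w1).2 (f w2).2 ?_⟩
    intro hcol
    exact hadj.ne (f.injective (Subtype.coe_injective hcol))

/-- Every circular-arc graph with no `H`-minor has treewidth at most `3·|V(H)|`. -/
theorem stmt_10 {W : Type} [Fintype W] (H : SimpleGraph W) {V : Type} [Fintype V]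
    (G : SimpleGraph V) (hG : IsCircularArcGraph G) (hH : ¬ IsMinorOf H G) :
    treewidth G ≤ 3 * Fintype.card W := by
  by_cases hW : IsEmpty W
  · exact absurd (minor_of_isEmpty H G) hH
  haveI : Nonempty W := not_isEmpty_iff.mp hW
  obtain ⟨s, t, hst, hadj⟩ := hG
  have hclique : ∀ S : Set V, G.IsClique S → S.ncard ≤ Fintype.card W := by
    intro S hS
    by_contra hx
    push_neg at hx
    exact hH (minor_of_big_clique H G hS (le_of_lt hx))
  suffices hmem : HasTreeDecompOfWidth G (3 * Fintype.card W) from Nat.sInf_le hmem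
  by_cases hV : IsEmpty V
  · refine ⟨Unit, ⊥, fun _ => ∅, ⟨⟨⟨fun a b => by rw [Subsingleton.elim a b]⟩,
      SimpleGraph.isAcyclic_bot⟩, fun v => isEmptyElim v, fun u v h => isEmptyElim u,
      fun v => isEmptyElim v⟩, fun i => by simp⟩
  haveI : Nonempty V := not_isEmpty_iff.mp hV
  set n := Fintype.card V with hndef
  have hn : 0 < n := Fintype.card_pos
  haveI : Nonempty (Fin n) := Fin.pos_iff_nonempty.mp hn
  set e0 : Fin n ≃ V := (Fintype.equivFin V).symm with he0
  set cfun : V → ℝ := fun v => toIcoMod tpp 0 (s v) with hcfun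
  set σ : Equiv.Perm (Fin n) := Tuple.sort (cfun ∘ e0) with hσ
  set E : Fin n ≃ V := σ.trans e0 with hE
  have hmono : Monotone (fun i => cfun (E i)) := Tuple.monotone_sort (cfun ∘ e0)
  set K : Set V := {v | toIcoMod tpp (s v) 0 ≤ t v} with hK
  set bag : Fin n → Set V := fun i => K ∪ {w | toIcoMod tpp (s w) (s (E i)) ≤ t w} with hbag
  have hself : ∀ v : V, v ∈ bag (E.symm v) := by
    intro v
    refine Or.inr ?_
    show toIcoMod tpp (s v) (s (E (E.symm v))) ≤ t v
    rw [Equiv.apply_symm_apply, toIcoMod_apply_left]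
    exact hst v
  refine ⟨Fin n, pathGraph n, bag,
    ⟨⟨⟨pathGraph_preconnected n⟩, pathGraph_isAcyclic n⟩, fun v => ⟨E.symm v, hself v⟩,
      ?_, ?_⟩, ?_⟩
  · -- edges covered
    intro u v huv
    rcases arcs_cross (hst u) (hst v) ((hadj u v huv.ne).mp huv) with h1 | h1
    · refine ⟨E.symm u, hself u, Or.inr ?_⟩
      show toIcoMod tpp (s v) (s (E (E.symm u))) ≤ t v
      rwa [Equiv.apply_symm_apply]
    · refine ⟨E.symm v, Or.inr ?_, hself v⟩
      show toIcoMod tpp (s u) (s (E (E.symm v))) ≤ t u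
      rwa [Equiv.apply_symm_apply]
  · -- bag supports connected
    intro v
    by_cases hvK : v ∈ K
    · have huniv : {i | v ∈ bag i} = Set.univ :=
        Set.eq_univ_of_forall (fun i => Or.inl hvK)
      rw [huniv]
      exact induce_convex_connected _ ⟨Classical.arbitrary (Fin n), trivial⟩
        (fun _ _ _ _ _ _ _ => trivial)
    · have hset : {i | v ∈ bag i} = {i | toIcoMod tpp (s v) (s (E i)) ≤ t v} := by
        ext i
        simp only [Set.mem_setOf_eq, hbag, Set.mem_union]
        exact ⟨fun h => h.resolve_left hvK, Or.inr⟩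
      rw [hset]
      refine induce_convex_connected _ ⟨E.symm v, ?_⟩ ?_
      · show toIcoMod tpp (s v) (s (E (E.symm v))) ≤ t v
        rw [Equiv.apply_symm_apply, toIcoMod_apply_left]
        exact hst v
      · intro i j k hij hjk hi hk
        have hvK' : t v < toIcoMod tpp (s v) 0 := not_le.mp hvK
        exact arc_convex hvK' (hmono hij) (hmono hjk) hi hk
  · -- bag sizes
    intro i
    have hKcl : G.IsClique K := by
      intro a ha b hb hne
      refine (hadj a b hne).mpr ⟨circleMap 0 1 0, ?_, ?_⟩
      · exact (mem_arc_iff (hst a)).mpr ha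
      · exact (mem_arc_iff (hst b)).mpr hb
    have hCcl : G.IsClique {w | toIcoMod tpp (s w) (s (E i)) ≤ t w} := by
      intro a ha b hb hne
      refine (hadj a b hne).mpr ⟨circleMap 0 1 (s (E i)), ?_, ?_⟩
      · exact (mem_arc_iff (hst a)).mpr ha
      · exact (mem_arc_iff (hst b)).mpr hb
    have h1 := hclique K hKcl
    have h2 := hclique _ hCcl
    have h3 : (bag i).ncard ≤ K.ncard + {w | toIcoMod tpp (s w) (s (E i)) ≤ t w}.ncard :=
      Set.ncard_union_le _ _
    omega
end

section
/- Every chordal graph G has a tree decomposition whose bags are exactly the maximal cliques of G (a clique tree of G). -/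
namespace CTA

open SimpleGraph

variable {V : Type}

/-- A simplicial vertex: its neighborhood is a clique. -/
def Simplicial (G : SimpleGraph V) (v : V) : Prop := G.IsClique (G.neighborSet v)

/-- Vertices reachable from `a` by walks avoiding `S`. -/
def Avoid (G : SimpleGraph V) (S : Set V) (a : V) : Set V :=
  {x | x ∉ S ∧ ∃ p : G.Walk x a, ∀ y ∈ p.support, y ∉ S}

lemma avoid_self {G : SimpleGraph V} {S : Set V} {a : V} (ha : a ∉ S) : a ∈ Avoid G S a :=
  ⟨ha, Walk.nil, by simp [ha]⟩

lemma avoid_not_mem {G : SimpleGraph V} {S : Set V} {a x : V} (hx : x ∈ Avoid G S a) : x ∉ S :=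
  hx.1

lemma avoid_adj {G : SimpleGraph V} {S : Set V} {a x y : V}
    (hx : x ∈ Avoid G S a) (hy : y ∉ S) (hadj : G.Adj y x) : y ∈ Avoid G S a := by
  obtain ⟨hxS, p, hp⟩ := hx
  exact ⟨hy, Walk.cons hadj p, by
    intro z hz
    rw [Walk.support_cons, List.mem_cons] at hz
    rcases hz with rfl | hz
    · exact hy
    · exact hp z hz⟩

lemma avoid_disjoint {G : SimpleGraph V} {S : Set V} {a b x : V}
    (hsep : IsSeparator G a b S) (hxa : x ∈ Avoid G S a) (hxb : x ∈ Avoid G S b) : False := by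
  obtain ⟨_, p, hp⟩ := hxa
  obtain ⟨_, q, hq⟩ := hxb
  obtain ⟨z, hz, hzS⟩ := hsep.2.2 (p.reverse.append q)
  rw [Walk.mem_support_append_iff, Walk.support_reverse, List.mem_reverse] at hz
  rcases hz with hz | hz
  · exact hp z hz hzS
  · exact hq z hz hzS

lemma sep_symm {G : SimpleGraph V} {a b : V} {S : Set V} (h : IsSeparator G a b S) :
    IsSeparator G b a S := by
  refine ⟨h.2.1, h.1, fun p => ?_⟩
  obtain ⟨x, hx, hxS⟩ := h.2.2 p.reverse
  rw [Walk.support_reverse, List.mem_reverse] at hx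
  exact ⟨x, hx, hxS⟩

lemma chordal_induce {G : SimpleGraph V} (hG : Chordal G) (s : Set V) :
    Chordal (G.induce s) := by
  intro v c hc hlen
  have hinj : Function.Injective (Subtype.val : s → V) := Subtype.val_injective
  set f := (SimpleGraph.Embedding.induce (G := G) s).toHom with hf
  have hfval : ∀ x : s, f x = (x : V) := fun x => rfl
  have hc' : (c.map f).IsCycle := hc.map (f := f) (by intro x y h; exact hinj h)
  have hlen' : 4 ≤ (c.map f).length := by rwa [Walk.length_map]
  obtain ⟨u, w, hu, hw, hadj, hne⟩ := hG _ (c.map f) hc' hlen'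
  rw [Walk.support_map, List.mem_map] at hu hw
  obtain ⟨u', hu', rfl⟩ := hu
  obtain ⟨w', hw', rfl⟩ := hw
  refine ⟨u', w', hu', hw', hadj, ?_⟩
  intro hmem
  apply hne
  rw [Walk.edges_map, List.mem_map]
  exact ⟨_, hmem, rfl⟩

/-- Every clique in a family closed set extends to a maximal one (finite case). -/
lemma exists_max_clique_ext [Finite V] {G : SimpleGraph V} {C : Set V} (hC : G.IsClique C) :
    ∃ M : Set V, C ⊆ M ∧ G.IsClique M ∧ ∀ T : Set V, G.IsClique T → M ⊆ T → T = M := by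
  obtain ⟨M, hM, hmax⟩ := Set.Finite.exists_maximalFor id {T : Set V | G.IsClique T ∧ C ⊆ T}
    (Set.toFinite _) ⟨C, hC, subset_rfl⟩
  exact ⟨M, hM.2, hM.1, fun T hT hMT => subset_antisymm (hmax (j := T) ⟨hT, hM.2.trans hMT⟩ hMT) hMT⟩

/-- Extend a clique avoiding `v` to one maximal among cliques avoiding `v`. -/
lemma exists_max_free_clique_ext [Finite V] {G : SimpleGraph V} {v : V} {C : Set V}
    (hC : G.IsClique C) (hv : v ∉ C) :
    ∃ M : Set V, C ⊆ M ∧ G.IsClique M ∧ v ∉ M ∧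
      ∀ T : Set V, G.IsClique T → v ∉ T → M ⊆ T → T = M := by
  obtain ⟨M, hM, hmax⟩ := Set.Finite.exists_maximalFor id
    {T : Set V | G.IsClique T ∧ v ∉ T ∧ C ⊆ T} (Set.toFinite _) ⟨C, hC, hv, subset_rfl⟩
  exact ⟨M, hM.2.2, hM.1, hM.2.1, fun T hT hvT hMT =>
    subset_antisymm (hmax (j := T) ⟨hT, hvT, hM.2.2.trans hMT⟩ hMT) hMT⟩

lemma exists_min_sep [Finite V] {G : SimpleGraph V} {a b : V} (hab : a ≠ b)
    (hnadj : ¬ G.Adj a b) :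
    ∃ S : Set V, IsSeparator G a b S ∧ ∀ S' : Set V, S' ⊂ S → ¬ IsSeparator G a b S' := by
  have h0 : IsSeparator G a b {z | z ≠ a ∧ z ≠ b} := by
    refine ⟨by simp, by simp [hab], fun p => ?_⟩
    cases p with
    | nil => exact absurd rfl hab
    | cons h q =>
      rename_i c
      refine ⟨c, by simp, h.ne', fun hcb => hnadj (hcb ▸ h)⟩
  obtain ⟨S, hS, hmin⟩ := Set.Finite.exists_minimalFor id {S : Set V | IsSeparator G a b S}
    (Set.toFinite _) ⟨_, h0⟩
  refine ⟨S, hS, fun S' hS' hsep => ?_⟩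
  have : S = S' := le_antisymm (hmin (j := S') hsep hS'.le) hS'.le
  exact hS'.ne this.symm

end CTA
namespace CTA

open SimpleGraph

variable {V : Type}

lemma length_one_edges {G : SimpleGraph V} {u w : V} (t : G.Walk u w) (h : t.length = 1) :
    s(u, w) ∈ t.edges := by
  cases t with
  | nil => simp at h
  | cons h' t' =>
    rename_i c
    rw [Walk.length_cons, Nat.add_eq_right] at h
    have hc : c = w := Walk.eq_of_length_eq_zero h
    subst hc
    simp

lemma shortcut [DecidableEq V] {G : SimpleGraph V} {x y u w : V} (p : G.Walk x y) (hu : u ∈ p.support)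
    (hadj : G.Adj u w) (hw : w ∈ (p.dropUntil u hu).support)
    (hne : s(u, w) ∉ p.edges) :
    ∃ p' : G.Walk x y, (∀ z ∈ p'.support, z ∈ p.support) ∧ p'.length < p.length := by
  set q := p.dropUntil u hu with hqdef
  refine ⟨(p.takeUntil u hu).append (Walk.cons hadj (q.dropUntil w hw)), ?_, ?_⟩
  · intro z hz
    rw [Walk.mem_support_append_iff] at hz
    rcases hz with hz | hz
    · exact Walk.support_takeUntil_subset _ _ hz
    · rw [Walk.support_cons, List.mem_cons] at hz
      rcases hz with rfl | hz
      · exact hu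
      · exact Walk.support_dropUntil_subset _ _
          (Walk.support_dropUntil_subset _ _ hz)
  · have hsplit : (p.takeUntil u hu).length + q.length = p.length := by
      rw [← Walk.length_append, Walk.take_spec]
    have hsplit2 : (q.takeUntil w hw).length + (q.dropUntil w hw).length = q.length := by
      rw [← Walk.length_append, Walk.take_spec]
    have h0 : (q.takeUntil w hw).length ≠ 0 := by
      intro h
      exact hadj.ne (Walk.eq_of_length_eq_zero h)
    have h1 : (q.takeUntil w hw).length ≠ 1 := by
      intro h
      exact hne (Walk.edges_dropUntil_subset _ hu
        (Walk.edges_takeUntil_subset _ hw (length_one_edges _ h)))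
    rw [Walk.length_append, Walk.length_cons]
    omega

lemma path_order [DecidableEq V] {G : SimpleGraph V} {x y u w : V} {p : G.Walk x y} (hp : p.IsPath)
    (hu : u ∈ p.support) (hw : w ∈ p.support) (hne : u ≠ w) :
    w ∈ (p.dropUntil u hu).support ∨ u ∈ (p.dropUntil w hw).support := by
  by_contra hcon
  push_neg at hcon
  obtain ⟨hwd, hud⟩ := hcon
  have hsplit : ∀ (z z' : V) (hz : z ∈ p.support), z' ∈ p.support →
      z' ∉ (p.dropUntil z hz).support → z' ∈ (p.takeUntil z hz).support := by
    intro z z' hz hz' hnd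
    have : z' ∈ ((p.takeUntil z hz).append (p.dropUntil z hz)).support := by
      rw [Walk.take_spec]; exact hz'
    rw [Walk.mem_support_append_iff] at this
    tauto
  have hwt : w ∈ (p.takeUntil u hu).support := hsplit u w hu hw hwd
  have hut : u ∈ (p.takeUntil w hw).support := hsplit w u hw hu hud
  have hpref : ∀ (z : V) (hz : z ∈ p.support),
      (p.takeUntil z hz).support <+: p.support := by
    intro z hz
    refine ⟨(p.dropUntil z hz).support.tail, ?_⟩
    rw [← Walk.support_append, Walk.take_spec]
  -- key claim
  have claim : ∀ (z z' : V) (hz : z ∈ p.support) (hz' : z' ∈ p.support),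
      (p.takeUntil z hz).support <+: (p.takeUntil z' hz').support →
      z' ∈ (p.takeUntil z hz).support → z = z' := by
    intro z z' hz hz' hpre hmem
    obtain ⟨t, ht⟩ := hpre
    rcases List.eq_nil_or_concat t with rfl | ⟨t', c, rfl⟩
    · rw [List.append_nil] at ht
      have h1 := congrArg List.getLast? ht
      rw [List.getLast?_eq_getLast (by simp), List.getLast?_eq_getLast (by simp),
        Walk.getLast_support, Walk.getLast_support] at h1
      exact Option.some_injective _ h1
    · exfalso
      rw [List.concat_eq_append] at ht
      have hnodup : (p.takeUntil z' hz').support.Nodup := (hp.takeUntil hz').support_nodup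
      rw [← ht, List.nodup_append] at hnodup
      have hz'mem : z' ∈ t' ++ [c] := by
        have h2 : ((p.takeUntil z hz).support ++ (t' ++ [c])).getLast? = some z' := by
          rw [ht, List.getLast?_eq_getLast (by simp), Walk.getLast_support]
        rw [← List.append_assoc, List.getLast?_concat] at h2
        have : c = z' := Option.some_injective _ h2
        simp [← this]
      exact hnodup.2.2 z' hmem z' hz'mem rfl
  rcases List.prefix_or_prefix_of_prefix (hpref u hu) (hpref w hw) with h | h
  · exact hne (claim u w hu hw h hwt)
  · exact hne (claim w u hw hu h hut).symm

lemma exists_induced_connector [DecidableEq V] {G : SimpleGraph V} {x y : V} (A : Set V)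
    (h : ∃ p : G.Walk x y, ∀ z ∈ p.support, z ≠ x → z ≠ y → z ∈ A) :
    ∃ p : G.Walk x y, p.IsPath ∧ (∀ z ∈ p.support, z ≠ x → z ≠ y → z ∈ A) ∧
      ∀ u w, u ∈ p.support → w ∈ p.support → G.Adj u w → s(u, w) ∈ p.edges := by
  classical
  set Ls : Set ℕ := {n | ∃ p : G.Walk x y, (∀ z ∈ p.support, z ≠ x → z ≠ y → z ∈ A) ∧
    p.length = n} with hLs
  obtain ⟨p₀, hp₀, hp₀len⟩ : sInf Ls ∈ Ls := Nat.sInf_mem (by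
    obtain ⟨p, hp⟩ := h; exact ⟨p.length, p, hp, rfl⟩)
  have hbmem : ∀ z ∈ p₀.bypass.support, z ≠ x → z ≠ y → z ∈ A :=
    fun z hz => hp₀ z (Walk.support_bypass_subset _ hz)
  have hblen : p₀.bypass.length = sInf Ls := by
    have h1 : p₀.bypass.length ≤ sInf Ls := hp₀len ▸ Walk.length_bypass_le _
    have h2 : sInf Ls ≤ p₀.bypass.length := Nat.sInf_le ⟨p₀.bypass, hbmem, rfl⟩
    omega
  refine ⟨p₀.bypass, Walk.bypass_isPath _, hbmem, ?_⟩
  intro u w hu hw hadj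
  by_contra hne
  rcases path_order (Walk.bypass_isPath p₀) hu hw hadj.ne with hcase | hcase
  · obtain ⟨p', hp'sub, hp'len⟩ := shortcut p₀.bypass hu hadj hcase hne
    have : p'.length ∈ Ls := ⟨p', fun z hz => hbmem z (hp'sub z hz), rfl⟩
    have := Nat.sInf_le this
    omega
  · obtain ⟨p', hp'sub, hp'len⟩ := shortcut p₀.bypass hw hadj.symm hcase
      (by rwa [Sym2.eq_swap])
    have : p'.length ∈ Ls := ⟨p', fun z hz => hbmem z (hp'sub z hz), rfl⟩
    have := Nat.sInf_le this
    omega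

lemma sep_access [DecidableEq V] {G : SimpleGraph V} {a b : V} {S : Set V}
    (hsep : IsSeparator G a b S) (hmin : ∀ S' : Set V, S' ⊂ S → ¬ IsSeparator G a b S')
    {x : V} (hx : x ∈ S) :
    ∃ q : G.Walk a x, ∀ z ∈ q.support, z ≠ x → z ∈ Avoid G S a := by
  classical
  have hS' := hmin (S \ {x}) (Set.sdiff_singleton_ssubset.mpr hx)
  have ha' : a ∉ S \ {x} := fun h => hsep.1 h.1
  have hb' : b ∉ S \ {x} := fun h => hsep.2.1 h.1
  obtain ⟨p, hp⟩ : ∃ p : G.Walk a b, ∀ z ∈ p.support, z ∉ S \ {x} := by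
    by_contra hc
    push_neg at hc
    exact hS' ⟨ha', hb', fun p => by
      obtain ⟨z, hz1, hz2⟩ := hc p; exact ⟨z, hz1, hz2⟩⟩
  have hxp : x ∈ p.support := by
    obtain ⟨z, hz, hzS⟩ := hsep.2.2 p
    have : z = x := by
      by_contra hzx
      exact hp z hz ⟨hzS, hzx⟩
    exact this ▸ hz
  set q := p.takeUntil x hxp with hqdef
  refine ⟨q, ?_⟩
  intro z hz hzx
  have hzS : z ∉ S := by
    intro hmem
    exact hp z (Walk.support_takeUntil_subset _ _ hz) ⟨hmem, hzx⟩
  have hxnot : x ∉ (q.takeUntil z hz).support := by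
    intro hmem
    have hcount : q.support.count x = 1 := Walk.count_support_takeUntil_eq_one p hxp
    have hsplit : q.support = (q.takeUntil z hz).support ++ (q.dropUntil z hz).support.tail := by
      rw [← Walk.support_append, Walk.take_spec]
    have h1 : 0 < (q.takeUntil z hz).support.count x := List.count_pos_iff.mpr hmem
    have h2 : 0 < (q.dropUntil z hz).support.tail.count x := by
      apply List.count_pos_iff.mpr
      have hxq : x ∈ (q.dropUntil z hz).support := Walk.end_mem_support _
      rw [Walk.support_eq_cons] at hxq
      rcases List.mem_cons.mp hxq with h | h
      · exact absurd h.symm hzx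
      · exact h
    rw [hsplit, List.count_append] at hcount
    omega
  refine ⟨hzS, (q.takeUntil z hz).reverse, ?_⟩
  intro m hm
  rw [Walk.support_reverse, List.mem_reverse] at hm
  intro hmS
  have hmx : m ≠ x := fun h => hxnot (h ▸ hm)
  exact hp m (Walk.support_takeUntil_subset _ _
    (Walk.support_takeUntil_subset _ _ hm)) ⟨hmS, hmx⟩

lemma sep_connector [DecidableEq V] {G : SimpleGraph V} {a b : V} {S : Set V}
    (hsep : IsSeparator G a b S) (hmin : ∀ S' : Set V, S' ⊂ S → ¬ IsSeparator G a b S')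
    {x y : V} (hx : x ∈ S) (hy : y ∈ S) :
    ∃ p : G.Walk x y, ∀ z ∈ p.support, z ≠ x → z ≠ y → z ∈ Avoid G S a := by
  obtain ⟨q1, hq1⟩ := sep_access hsep hmin hx
  obtain ⟨q2, hq2⟩ := sep_access hsep hmin hy
  refine ⟨q1.reverse.append q2, ?_⟩
  intro z hz hzx hzy
  rw [Walk.mem_support_append_iff, Walk.support_reverse, List.mem_reverse] at hz
  rcases hz with hz | hz
  · exact hq1 z hz hzx
  · exact hq2 z hz hzy

lemma sep_clique [DecidableEq V] {G : SimpleGraph V} (hG : Chordal G) {a b : V} {S : Set V}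
    (hsep : IsSeparator G a b S) (hmin : ∀ S' : Set V, S' ⊂ S → ¬ IsSeparator G a b S') :
    G.IsClique S := by
  intro x hx y hy hxy
  by_contra hXY
  obtain ⟨pA, hpA_path, hpA_mem, hpA_ind⟩ :=
    exists_induced_connector (Avoid G S a) (sep_connector hsep hmin hx hy)
  have hsepb := sep_symm hsep
  have hminb : ∀ S' : Set V, S' ⊂ S → ¬ IsSeparator G b a S' :=
    fun S' h hb => hmin S' h (sep_symm hb)
  obtain ⟨pB, hpB_path, hpB_mem, hpB_ind⟩ :=
    exists_induced_connector (Avoid G S b) (sep_connector hsepb hminb hy hx)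
  -- lengths are at least 2
  have hlen : ∀ {u w : V} (t : G.Walk u w), u ≠ w → ¬ G.Adj u w → 2 ≤ t.length := by
    intro u w t huw hnad
    by_contra hlt
    push_neg at hlt
    interval_cases h : t.length
    · exact huw (Walk.eq_of_length_eq_zero h)
    · exact hnad (t.adj_of_mem_edges (length_one_edges t h))
  have hlenA : 2 ≤ pA.length := hlen pA hxy hXY
  have hlenB : 2 ≤ pB.length := hlen pB hxy.symm (fun h => hXY h.symm)
  set c := pA.append pB with hcdef
  have hclen : c.length = pA.length + pB.length := Walk.length_append _ _
  -- membership facts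
  have hxA : x ∉ Avoid G S a := fun h => h.1 hx
  have hyA : y ∉ Avoid G S a := fun h => h.1 hy
  have hxB : x ∉ Avoid G S b := fun h => h.1 hx
  have hyB : y ∉ Avoid G S b := fun h => h.1 hy
  have hABdisj : ∀ z, z ∈ Avoid G S a → z ∈ Avoid G S b → False :=
    fun z h1 h2 => avoid_disjoint hsep h1 h2
  have hkey : ∀ z, z ∈ pA.support → z ∈ pB.support → z = x ∨ z = y := by
    intro z hzA hzB
    by_contra hcon
    push_neg at hcon
    exact hABdisj z (hpA_mem z hzA hcon.1 hcon.2) (hpB_mem z hzB hcon.2 hcon.1)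
  have hxtailA : x ∉ pA.support.tail := by
    have := hpA_path.support_nodup
    rw [Walk.support_eq_cons] at this
    exact (List.nodup_cons.mp this).1
  have hytailB : y ∉ pB.support.tail := by
    have := hpB_path.support_nodup
    rw [Walk.support_eq_cons] at this
    exact (List.nodup_cons.mp this).1
  have hcyc : c.IsCycle := by
    refine ⟨⟨⟨?_⟩, ?_⟩, ?_⟩
    · -- edges nodup
      rw [hcdef, Walk.edges_append, List.nodup_append]
      refine ⟨hpA_path.isTrail.edges_nodup, hpB_path.isTrail.edges_nodup, ?_⟩
      intro e heA e' heB hee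
      subst hee
      induction e with
      | h c₁ c₂ =>
        have h1 : c₁ ∈ pA.support := pA.fst_mem_support_of_mem_edges heA
        have h2 : c₂ ∈ pA.support := pA.snd_mem_support_of_mem_edges heA
        have h3 : c₁ ∈ pB.support := pB.fst_mem_support_of_mem_edges heB
        have h4 : c₂ ∈ pB.support := pB.snd_mem_support_of_mem_edges heB
        have hadj : G.Adj c₁ c₂ := pA.adj_of_mem_edges heA
        rcases hkey c₁ h1 h3 with rfl | rfl <;> rcases hkey c₂ h2 h4 with rfl | rfl
        · exact hadj.ne rfl
        · exact hXY hadj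
        · exact hXY hadj.symm
        · exact hadj.ne rfl
    · -- not nil
      intro hnil
      have : c.length = 0 := by rw [hnil]; rfl
      omega
    · -- support tail nodup
      have htail : c.support.tail = pA.support.tail ++ pB.support.tail := by
        rw [hcdef, Walk.support_append, Walk.support_eq_cons pA, List.cons_append,
          List.tail_cons]
        rfl
      rw [htail, List.nodup_append]
      refine ⟨List.Nodup.of_cons (Walk.support_eq_cons pA ▸ hpA_path.support_nodup),
        List.Nodup.of_cons (Walk.support_eq_cons pB ▸ hpB_path.support_nodup), ?_⟩
      intro z hzA z' hzB hzz
      subst hzz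
      have hzA' : z ∈ pA.support := by rw [Walk.support_eq_cons]; exact List.mem_cons_of_mem _ hzA
      have hzB' : z ∈ pB.support := by rw [Walk.support_eq_cons]; exact List.mem_cons_of_mem _ hzB
      rcases hkey z hzA' hzB' with rfl | rfl
      · exact hxtailA hzA
      · exact hytailB hzB
  obtain ⟨u, w, hu, hw, hadj, hne⟩ := hG x c hcyc (by omega)
  have hsupp : ∀ z, z ∈ c.support → z ∈ pA.support ∨ z ∈ pB.support := by
    intro z hz
    rw [hcdef, Walk.mem_support_append_iff] at hz
    exact hz
  have hedgeA : ∀ {e}, e ∈ pA.edges → e ∈ c.edges := by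
    intro e he; rw [hcdef, Walk.edges_append]; exact List.mem_append_left _ he
  have hedgeB : ∀ {e}, e ∈ pB.edges → e ∈ c.edges := by
    intro e he; rw [hcdef, Walk.edges_append]; exact List.mem_append_right _ he
  -- final case analysis
  by_cases huA : u ∈ pA.support <;> by_cases hwA : w ∈ pA.support
  · exact hne (hedgeA (hpA_ind u w huA hwA hadj))
  · -- u ∈ A-side, w ∉ A-side; w must be in B side
    have hwB : w ∈ pB.support := (hsupp w hw).resolve_left hwA
    have hwxy : w ≠ x ∧ w ≠ y := by
      constructor
      · rintro rfl; exact hwA (Walk.start_mem_support _)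
      · rintro rfl; exact hwA (Walk.end_mem_support _)
    have hwAv : w ∈ Avoid G S b := hpB_mem w hwB hwxy.2 hwxy.1
    by_cases huB : u ∈ pB.support
    · exact hne (hedgeB (hpB_ind u w huB hwB hadj))
    · have huxy : u ≠ x ∧ u ≠ y := by
        constructor
        · rintro rfl; exact huB (Walk.end_mem_support _)
        · rintro rfl; exact huB (Walk.start_mem_support _)
      have huAv : u ∈ Avoid G S a := hpA_mem u huA huxy.1 huxy.2
      exact hABdisj w (avoid_adj huAv hwAv.1 hadj.symm) hwAv
  · -- u ∉ A-side: u ∈ B side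
    have huB : u ∈ pB.support := (hsupp u hu).resolve_left huA
    have huxy : u ≠ x ∧ u ≠ y := by
      constructor
      · rintro rfl; exact huA (Walk.start_mem_support _)
      · rintro rfl; exact huA (Walk.end_mem_support _)
    have huAv : u ∈ Avoid G S b := hpB_mem u huB huxy.2 huxy.1
    by_cases hwB : w ∈ pB.support
    · exact hne (hedgeB (hpB_ind u w huB hwB hadj))
    · have hwxy : w ≠ x ∧ w ≠ y := by
        constructor
        · rintro rfl; exact hwB (Walk.end_mem_support _)
        · rintro rfl; exact hwB (Walk.start_mem_support _)
      have hwAv : w ∈ Avoid G S a := hpA_mem w hwA hwxy.1 hwxy.2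
      exact hABdisj u (avoid_adj hwAv huAv.1 hadj) huAv
  · have huB : u ∈ pB.support := (hsupp u hu).resolve_left huA
    have hwB : w ∈ pB.support := (hsupp w hw).resolve_left hwA
    exact hne (hedgeB (hpB_ind u w huB hwB hadj))

end CTA
namespace CTA

open SimpleGraph

variable {V : Type}

lemma induce_adj_iff {G : SimpleGraph V} {W : Set V} {a b : ↥W} :
    (G.induce W).Adj a b ↔ G.Adj ↑a ↑b := Iff.rfl

lemma simplicial_of_induce {G : SimpleGraph V} {W : Set V} {u : V} (hu : u ∈ W)
    (hN : ∀ y, G.Adj u y → y ∈ W)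
    (hs : Simplicial (G.induce W) ⟨u, hu⟩) : Simplicial G u := by
  intro p hp q hq hpq
  have hpW : p ∈ W := hN p hp
  have hqW : q ∈ W := hN q hq
  have h1 : (⟨p, hpW⟩ : ↥W) ∈ (G.induce W).neighborSet ⟨u, hu⟩ := hp
  have h2 : (⟨q, hqW⟩ : ↥W) ∈ (G.induce W).neighborSet ⟨u, hu⟩ := hq
  exact hs h1 h2 (fun h => hpq (congrArg Subtype.val h))

lemma dirac : ∀ (n : ℕ) (V : Type) [Fintype V] (G : SimpleGraph V), Fintype.card V ≤ n →
    Chordal G → ∀ a b : V, a ≠ b → ¬ G.Adj a b →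
    ∃ u w : V, u ≠ w ∧ ¬ G.Adj u w ∧ Simplicial G u ∧ Simplicial G w := by
  intro n
  induction n with
  | zero =>
    intro V _ G hcard _ a b _ _
    have : 0 < Fintype.card V := Fintype.card_pos_iff.mpr ⟨a⟩
    omega
  | succ n ih =>
    intro V _ G hcard hG a b hab hnadj
    classical
    obtain ⟨S, hsep, hmin⟩ := exists_min_sep hab hnadj
    have hscl : G.IsClique S := sep_clique hG hsep hmin
    have key : ∀ c d : V, IsSeparator G c d S → (∀ S' : Set V, S' ⊂ S → ¬IsSeparator G c d S') →
        ∃ u, u ∈ Avoid G S c ∧ Simplicial G u := by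
      intro c d hsepc hminc
      set W := Avoid G S c ∪ S with hW
      have hdW : d ∉ W := by
        rintro (hd | hd)
        · obtain ⟨hdS, p, hp⟩ := hd
          obtain ⟨z, hz, hzS⟩ := hsepc.2.2 p.reverse
          rw [Walk.support_reverse, List.mem_reverse] at hz
          exact hp z hz hzS
        · exact hsepc.2.1 hd
      have hcW : c ∈ Avoid G S c := avoid_self hsepc.1
      have hclosure : ∀ u, u ∈ Avoid G S c → ∀ y, G.Adj u y → y ∈ W := by
        intro u hu y hy
        by_cases hyS : y ∈ S
        · exact Or.inr hyS
        · exact Or.inl (avoid_adj hu hyS hy.symm)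
      haveI : Fintype ↥W := Fintype.ofFinite _
      have hcardW : Fintype.card ↥W ≤ n := by
        have h1 : Fintype.card ↥W < Fintype.card V := by
          apply Fintype.card_lt_of_injective_of_notMem Subtype.val Subtype.val_injective
            (b := d)
          rwa [Subtype.range_coe]
        omega
      have hWch : Chordal (G.induce W) := chordal_induce hG W
      by_cases hcomp : ∀ p q : ↥W, p ≠ q → (G.induce W).Adj p q
      · refine ⟨c, hcW, ?_⟩
        intro p hp q hq hpq
        exact hcomp ⟨p, hclosure c hcW p hp⟩ ⟨q, hclosure c hcW q hq⟩
          (fun h => hpq (congrArg Subtype.val h))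
      · push_neg at hcomp
        obtain ⟨p, q, hpq, hnadjpq⟩ := hcomp
        obtain ⟨u', w', hne', hnadj', hs1, hs2⟩ := ih ↥W (G.induce W) hcardW hWch p q hpq hnadjpq
        have houts : (↑u' : V) ∉ S ∨ (↑w' : V) ∉ S := by
          by_contra hcon
          push_neg at hcon
          exact hnadj' (hscl hcon.1 hcon.2 (fun h => hne' (Subtype.ext h)))
        rcases houts with h | h
        · have huA : (↑u' : V) ∈ Avoid G S c := u'.2.resolve_right h
          exact ⟨u', huA, simplicial_of_induce u'.2 (fun y hy => hclosure _ huA y hy)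
            (by simpa using hs1)⟩
        · have huA : (↑w' : V) ∈ Avoid G S c := w'.2.resolve_right h
          exact ⟨w', huA, simplicial_of_induce w'.2 (fun y hy => hclosure _ huA y hy)
            (by simpa using hs2)⟩
    obtain ⟨u, hu, hus⟩ := key a b hsep hmin
    obtain ⟨w, hw, hws⟩ := key b a (sep_symm hsep) (fun S' h hb => hmin S' h (sep_symm hb))
    refine ⟨u, w, ?_, ?_, hus, hws⟩
    · rintro rfl
      exact avoid_disjoint hsep hu hw
    · intro hadj
      exact avoid_disjoint hsep hu (avoid_adj hw (avoid_not_mem hu) hadj)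
  -- note: avoid_adj hw (u ∉ S) (Adj u w) : u ∈ Avoid G S b

lemma exists_simplicial {V : Type} [Fintype V] [Nonempty V] (G : SimpleGraph V)
    (hG : Chordal G) : ∃ v, Simplicial G v := by
  classical
  by_cases hcomp : ∀ p q : V, p ≠ q → G.Adj p q
  · exact ⟨Classical.arbitrary V, fun p hp q hq hpq => hcomp p q hpq⟩
  · push_neg at hcomp
    obtain ⟨p, q, hpq, hnadj⟩ := hcomp
    obtain ⟨u, _, _, _, hs, _⟩ := dirac (Fintype.card V) V G le_rfl hG p q hpq hnadj
    exact ⟨u, hs⟩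

end CTA
namespace CTA

open SimpleGraph

variable {V : Type}

lemma image_preimage_of_subset {U K : Set V} (h : K ⊆ U) :
    Subtype.val '' (Subtype.val ⁻¹' K : Set ↥U) = K := by
  rw [Subtype.image_preimage_coe]
  exact Set.inter_eq_self_of_subset_right h

lemma singleton_induce_connected {ι : Type} (T : SimpleGraph ι) (i : ι) :
    (T.induce {i}).Connected := by
  rw [connected_iff]
  refine ⟨fun a b => ?_, ⟨⟨i, rfl⟩⟩⟩
  have : a = b := Subtype.ext (a.2.trans b.2.symm)
  exact this ▸ Reachable.refl a

lemma exists_dart_snd {ι : Type} {T : SimpleGraph ι} :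
    ∀ {u w : ι} (p : T.Walk u w), p.length ≠ 0 → ∃ d ∈ p.darts, d.snd = w := by
  intro u w p
  induction p with
  | nil => intro h; simp at h
  | @cons u c w h q ihq =>
    intro _
    by_cases hq : q.length = 0
    · have hcw : c = w := Walk.eq_of_length_eq_zero hq
      subst hcw
      exact ⟨_, by rw [Walk.darts_cons]; exact List.mem_cons_self, rfl⟩
    · obtain ⟨d, hd, hds⟩ := ihq hq
      exact ⟨d, by rw [Walk.darts_cons]; exact List.mem_cons_of_mem _ hd, hds⟩

lemma walk_pull {ι : Type} {T : SimpleGraph ι} {T' : SimpleGraph (Option ι)}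
    (hA : ∀ i j : ι, T'.Adj (some i) (some j) → T.Adj i j) :
    ∀ {a b : Option ι} (p : T'.Walk a b), (∀ z ∈ p.support, z ≠ none) →
      ∀ (i j : ι), a = some i → b = some j →
      ∃ q : T.Walk i j, q.support.map some = p.support ∧
        q.edges.map (Sym2.map some) = p.edges := by
  intro a b p
  induction p with
  | nil =>
    intro _ i j ha hb
    subst ha
    obtain rfl : i = j := by injection hb
    exact ⟨Walk.nil, by simp, by simp⟩
  | cons h p ihp =>
    rename_i u c d
    intro hsup i j ha hb
    have hcmem : c ∈ (Walk.cons h p).support := by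
      rw [Walk.support_cons]
      exact List.mem_cons_of_mem _ p.start_mem_support
    have hc : c ≠ none := hsup c hcmem
    obtain ⟨k, hk⟩ := Option.ne_none_iff_exists'.mp hc
    subst ha hk
    have hsub : ∀ z ∈ p.support, z ≠ none := by
      intro z hz
      apply hsup
      rw [Walk.support_cons]
      exact List.mem_cons_of_mem _ hz
    obtain ⟨q, hq1, hq2⟩ := ihp hsub k j rfl hb
    refine ⟨Walk.cons (hA i k h) q, ?_, ?_⟩
    · rw [Walk.support_cons, Walk.support_cons, List.map_cons, hq1]
    · rw [Walk.edges_cons, Walk.edges_cons, List.map_cons, hq2, Sym2.map_pair_eq]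

lemma leaf_tree {ι : Type} {T : SimpleGraph ι} (hT : T.IsTree) (i₀ : ι) :
    ∃ T' : SimpleGraph (Option ι),
      (∀ i j : ι, T'.Adj (some i) (some j) ↔ T.Adj i j) ∧
      (∀ x, T'.Adj none x ↔ x = some i₀) ∧
      T'.IsTree := by
  classical
  set T' : SimpleGraph (Option ι) := SimpleGraph.fromRel
    (fun a b => (∃ i j, T.Adj i j ∧ a = some i ∧ b = some j) ∨ (a = none ∧ b = some i₀))
    with hT'def
  have adj_ss : ∀ i j : ι, T'.Adj (some i) (some j) ↔ T.Adj i j := by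
    intro i j
    rw [hT'def, SimpleGraph.fromRel_adj]
    constructor
    · rintro ⟨hne, (⟨i', j', ha, hi, hj⟩ | ⟨h1, h2⟩) | (⟨i', j', ha, hi, hj⟩ | ⟨h1, h2⟩)⟩
      · obtain rfl : i = i' := by injection hi
        obtain rfl : j = j' := by injection hj
        exact ha
      · exact absurd h1 (by simp)
      · obtain rfl : j = i' := by injection hi
        obtain rfl : i = j' := by injection hj
        exact ha.symm
      · exact absurd h1 (by simp)
    · intro h
      exact ⟨fun he => h.ne (by injection he), Or.inl (Or.inl ⟨i, j, h, rfl, rfl⟩)⟩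
  have adj_none : ∀ x, T'.Adj none x ↔ x = some i₀ := by
    intro x
    rw [hT'def, SimpleGraph.fromRel_adj]
    constructor
    · rintro ⟨hne, (⟨i', j', _, hi, _⟩ | ⟨_, h2⟩) | (⟨i', j', _, _, hj⟩ | ⟨_, h2⟩)⟩
      · exact absurd hi (by simp)
      · exact h2
      · exact absurd hj (by simp)
      · exact absurd h2 (by simp)
    · rintro rfl
      exact ⟨by simp, Or.inl (Or.inr ⟨rfl, rfl⟩)⟩
  have hAdjnone' : ∀ x, T'.Adj x none → x = some i₀ := by
    intro x h
    exact (adj_none x).mp h.symm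
  refine ⟨T', adj_ss, adj_none, ?_, ?_⟩
  · -- connected
    rw [connected_iff]
    refine ⟨fun x y => ?_, ⟨none⟩⟩
    have hto : ∀ x : Option ι, T'.Reachable x (some i₀) := by
      intro x
      cases x with
      | none => exact ((adj_none (some i₀)).mpr rfl).reachable
      | some i =>
        have hr : T.Reachable i i₀ := hT.isConnected.preconnected i i₀
        exact hr.map ⟨some, fun h => (adj_ss _ _).mpr h⟩
    exact (hto x).trans (hto y).symm
  · -- acyclic
    intro x c hc
    by_cases hnone : none ∈ c.support
    · have hc₂ := hc.rotate hnone
      revert hc₂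
      generalize c.rotate none hnone = c₂
      intro hc₂
      cases c₂ with
      | nil => exact hc₂.not_of_nil
      | cons h q =>
        rename_i z
        have hz : z = some i₀ := (adj_none z).mp h
        subst hz
        have hlen : 3 ≤ q.length + 1 := by
          have := hc₂.three_le_length
          rwa [Walk.length_cons] at this
        obtain ⟨d₂, hd₂, hd₂snd⟩ := exists_dart_snd q (by omega)
        have hd₂fst : d₂.fst = some i₀ := by
          apply hAdjnone'
          have := d₂.adj
          rwa [hd₂snd] at this
        have hnodup : (Walk.cons h q).edges.Nodup := hc₂.isCircuit.isTrail.edges_nodup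
        have hd₁mem : (⟨(none, some i₀), h⟩ : T'.Dart) ∈ (Walk.cons h q).darts := by
          rw [Walk.darts_cons]; exact List.mem_cons_self
        have hd₂mem : d₂ ∈ (Walk.cons h q).darts := by
          rw [Walk.darts_cons]; exact List.mem_cons_of_mem _ hd₂
        have hedges : (Walk.cons h q).edges = (Walk.cons h q).darts.map SimpleGraph.Dart.edge :=
          rfl
        have hinj := List.inj_on_of_nodup_map (hedges ▸ hnodup)
        have heq : (⟨(none, some i₀), h⟩ : T'.Dart).edge = d₂.edge := by
          have e1 : (⟨(none, some i₀), h⟩ : T'.Dart).edge = s(none, some i₀) := rfl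
          have e2 : d₂.edge = s(some i₀, none) := by
            have : d₂.edge = s(d₂.fst, d₂.snd) := rfl
            rw [this, hd₂fst, hd₂snd]
          rw [e1, e2]
          exact Sym2.eq_swap
        have hde := hinj hd₁mem hd₂mem heq
        have hfst := congrArg (fun d : T'.Dart => d.toProd.1) hde
        simp only [hd₂fst] at hfst
        exact absurd hfst (by simp)
    · have hx : x ≠ none := fun h => hnone (h ▸ c.start_mem_support)
      obtain ⟨k, hk⟩ := Option.ne_none_iff_exists'.mp hx
      subst hk
      obtain ⟨q, hsup, hedg⟩ := walk_pull (fun i j h => (adj_ss i j).mp h) c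
        (fun z hz => fun h => hnone (h ▸ hz)) k k rfl rfl
      have hql : q.length = c.length := by
        have := congrArg List.length hsup
        rw [List.length_map, Walk.length_support, Walk.length_support] at this
        omega
      have hq : q.IsCycle := by
        refine ⟨⟨⟨?_⟩, ?_⟩, ?_⟩
        · have := hc.isCircuit.isTrail.edges_nodup
          rw [← hedg] at this
          exact this.of_map _
        · intro h
          have h3 := hc.three_le_length
          rw [h] at hql
          simp only [Walk.length_nil] at hql
          omega
        · have := hc.support_nodup
          have htl : c.support.tail = (q.support.tail).map some := by
            rw [← hsup, List.map_tail]
          rw [htl] at this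
          exact this.of_map _
      exact hT.IsAcyclic q hq

lemma induce_connected_map {ι : Type} {T : SimpleGraph ι} {T' : SimpleGraph (Option ι)}
    (hss : ∀ i j, T.Adj i j → T'.Adj (some i) (some j)) {s : Set ι}
    (hc : (T.induce s).Connected) : (T'.induce (some '' s)).Connected := by
  let f : T.induce s →g T'.induce (some '' s) :=
    ⟨fun p => ⟨some ↑p, ⟨↑p, p.2, rfl⟩⟩, fun {a b} h => hss _ _ h⟩
  apply SimpleGraph.Connected.map f ?_ hc
  rintro ⟨x, hx⟩
  obtain ⟨i, hi, rfl⟩ := hx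
  exact ⟨⟨i, hi⟩, rfl⟩

lemma induce_connected_insert {ι : Type} {T : SimpleGraph ι} {T' : SimpleGraph (Option ι)}
    (hss : ∀ i j, T.Adj i j → T'.Adj (some i) (some j)) {s : Set ι} {i₀ : ι}
    (hi₀ : i₀ ∈ s) (hadj : T'.Adj none (some i₀)) (hc : (T.induce s).Connected) :
    (T'.induce (insert none (some '' s))).Connected := by
  rw [connected_iff]
  refine ⟨fun a b => ?_, ⟨⟨none, Set.mem_insert _ _⟩⟩⟩
  have hto : ∀ x : ↥(insert none (some '' s)),
      (T'.induce (insert none (some '' s))).Reachable x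
        ⟨some i₀, Set.mem_insert_iff.mpr (Or.inr ⟨i₀, hi₀, rfl⟩)⟩ := by
    rintro ⟨x, hx⟩
    rcases Set.mem_insert_iff.mp hx with rfl | ⟨i, hi, rfl⟩
    · exact SimpleGraph.Adj.reachable hadj
    · have hr := hc.preconnected ⟨i, hi⟩ ⟨i₀, hi₀⟩
      let f : T.induce s →g T'.induce (insert none (some '' s)) :=
        ⟨fun p => ⟨some ↑p, Set.mem_insert_iff.mpr (Or.inr ⟨↑p, p.2, rfl⟩)⟩,
          fun {a b} h => hss _ _ h⟩
      exact hr.map f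
  exact (hto a).trans (hto b).symm

/-- Maximal among cliques avoiding `v`. -/
def MF (G : SimpleGraph V) (v : V) (K : Set V) : Prop :=
  G.IsClique K ∧ v ∉ K ∧ ∀ T : Set V, G.IsClique T → v ∉ T → K ⊆ T → T = K

def Ufree (v : V) : Set V := {x | x ≠ v}

lemma clique_lift {G : SimpleGraph V} {U : Set V} {K' : Set ↥U} :
    (G.induce U).IsClique K' ↔ G.IsClique (Subtype.val '' K') := by
  constructor
  · rintro h x ⟨x', hx', rfl⟩ y ⟨y', hy', rfl⟩ hxy
    exact h hx' hy' (fun he => hxy (congrArg Subtype.val he))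
  · intro h x hx y hy hxy
    exact h ⟨x, hx, rfl⟩ ⟨y, hy, rfl⟩ (fun he => hxy (Subtype.ext he))

lemma mf_iff {G : SimpleGraph V} {v : V} {K' : Set ↥(Ufree v)} :
    _root_.IsMaxClique (G.induce (Ufree v)) K' ↔ MF G v (Subtype.val '' K') := by
  have hUsub : ∀ (T : Set V), v ∉ T → T ⊆ Ufree v := by
    intro T hvT x hx
    rintro rfl
    exact hvT hx
  constructor
  · rintro ⟨hcl, hmax⟩
    refine ⟨clique_lift.mp hcl, ?_, ?_⟩
    · rintro ⟨x, _, hxv⟩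
      exact x.2 hxv
    · intro T hT hvT hsub
      set T' : Set ↥(Ufree v) := Subtype.val ⁻¹' T with hT'
      have hLT' : Subtype.val '' T' = T := image_preimage_of_subset (hUsub T hvT)
      have hclT' : (G.induce (Ufree v)).IsClique T' := clique_lift.mpr (hLT' ▸ hT)
      have hsub' : K' ⊆ T' := by
        intro x hx
        exact hsub ⟨x, hx, rfl⟩
      have := hmax T' hclT' hsub'
      rw [← hLT', this]
  · rintro ⟨hcl, _, hmax⟩
    refine ⟨clique_lift.mpr hcl, ?_⟩
    intro T' hT' hsub
    have h1 : Subtype.val '' T' = Subtype.val '' K' := by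
      apply hmax
      · exact clique_lift.mp hT'
      · rintro ⟨x, _, hxv⟩
        exact x.2 hxv
      · exact Set.image_mono hsub
    exact Set.image_injective.mpr Subtype.val_injective h1

lemma empty_case {V : Type} [IsEmpty V] (G : SimpleGraph V) :
    ∃ (ι : Type) (T : SimpleGraph ι) (bag : ι → Set V),
      IsTreeDecomposition G T bag ∧ Function.Injective bag ∧
      (∀ i, _root_.IsMaxClique G (bag i)) ∧
      (∀ S : Set V, _root_.IsMaxClique G S → ∃ i, bag i = S) := by
  refine ⟨Unit, ⊥, fun _ => (∅ : Set V), ⟨⟨?_, ?_⟩, fun v => isEmptyElim v,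
    fun u => isEmptyElim u, fun u => isEmptyElim u⟩, fun a b _ => Subsingleton.elim a b,
    fun _ => ⟨by simp, fun T _ _ => Set.eq_empty_of_isEmpty T⟩,
    fun S _ => ⟨(), (Set.eq_empty_of_isEmpty S).symm⟩⟩
  · rw [connected_iff]
    exact ⟨fun a b => (Subsingleton.elim a b) ▸ Reachable.refl a, ⟨()⟩⟩
  · exact isAcyclic_bot

end CTA
namespace CTA

open SimpleGraph

theorem main : ∀ (n : ℕ) (V : Type) [Fintype V] (G : SimpleGraph V), Fintype.card V ≤ n →
    Chordal G →
    ∃ (ι : Type) (T : SimpleGraph ι) (bag : ι → Set V),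
      IsTreeDecomposition G T bag ∧ Function.Injective bag ∧
      (∀ i, _root_.IsMaxClique G (bag i)) ∧
      (∀ S : Set V, _root_.IsMaxClique G S → ∃ i, bag i = S) := by
  intro n
  induction n with
  | zero =>
    intro V _ G hcard hG
    haveI : IsEmpty V := by
      rw [← Fintype.card_eq_zero_iff]
      omega
    exact empty_case G
  | succ n ih =>
    intro V _ G hcard hG
    classical
    cases isEmpty_or_nonempty V with
    | inl hemp => exact empty_case G
    | inr hne =>
      obtain ⟨v, hv⟩ := exists_simplicial G hG
      haveI : Fintype ↥(Ufree v) := Fintype.ofFinite _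
      have hcU : Fintype.card ↥(Ufree v) ≤ n := by
        have h1 : Fintype.card ↥(Ufree v) < Fintype.card V := by
          apply Fintype.card_lt_of_injective_of_notMem Subtype.val Subtype.val_injective
            (b := v)
          rw [Subtype.range_coe]
          exact fun h => h rfl
        omega
      obtain ⟨ι, T, bag', htd', hinj', hmax', hsurj'⟩ :=
        ih ↥(Ufree v) (G.induce (Ufree v)) hcU (chordal_induce hG (Ufree v))
      obtain ⟨htree, hcov', hedge', hconn'⟩ := htd'
      set N : Set V := G.neighborSet v with hNdef
      have hvN : v ∉ N := fun h => G.irrefl h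
      have hNU : N ⊆ Ufree v := fun y hy => SimpleGraph.Adj.ne' hy
      set Kv : Set V := insert v N with hKvdef
      have hKvcl : G.IsClique Kv := hv.insert (fun b hb _ => hb)
      have hvKv : v ∈ Kv := Set.mem_insert _ _
      have hNKv : N ⊆ Kv := Set.subset_insert _ _
      have hsubKv : ∀ T₀ : Set V, G.IsClique T₀ → v ∈ T₀ → T₀ ⊆ Kv := by
        intro T₀ hT₀ hvT₀ t ht
        by_cases htv : t = v
        · exact htv ▸ hvKv
        · exact hNKv (hT₀ hvT₀ ht (fun h => htv h.symm))
      have hKvmax : _root_.IsMaxClique G Kv :=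
        ⟨hKvcl, fun T₀ hT₀ hsub => subset_antisymm (hsubKv T₀ hT₀ (hsub hvKv)) hsub⟩
      have hmemKv : ∀ u : V, u ≠ v → (u ∈ Kv ↔ u ∈ N) := by
        intro u hu
        simp [hKvdef, Set.mem_insert_iff, hu]
      have huniq : ∀ K : Set V, _root_.IsMaxClique G K → v ∈ K → K = Kv := by
        intro K hK hvK
        exact (hK.2 Kv hKvcl (hsubKv K hK.1 hvK)).symm
      have hMFchar : ∀ K : Set V, v ∉ K → (_root_.IsMaxClique G K ↔ (MF G v K ∧ K ≠ N)) := by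
        intro K hvK
        constructor
        · intro hK
          refine ⟨⟨hK.1, hvK, fun T₀ hT₀ _ hsub => hK.2 T₀ hT₀ hsub⟩, ?_⟩
          intro hKN
          have hKKv : K ⊆ Kv := hKN ▸ hNKv
          have h2 := hK.2 Kv hKvcl hKKv
          rw [h2] at hvKv
          exact hvK hvKv
        · rintro ⟨⟨hcl, _, hmaxf⟩, hKN⟩
          refine ⟨hcl, ?_⟩
          intro T₀ hT₀ hsub
          by_cases hvT₀ : v ∈ T₀
          · exfalso
            have hKN' : K ⊆ N := by
              intro k hk
              rcases Set.mem_insert_iff.mp (hsubKv T₀ hT₀ hvT₀ (hsub hk)) with h | h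
              · exact absurd (h ▸ hk) hvK
              · exact h
            exact hKN (hmaxf N hv hvN hKN').symm
          · exact hmaxf T₀ hT₀ hvT₀ hsub
      have hLinj : Function.Injective (fun K' : Set ↥(Ufree v) => Subtype.val '' K') :=
        Set.image_injective.mpr Subtype.val_injective
      have hliftU : ∀ K : Set V, v ∉ K → K ⊆ Ufree v := by
        intro K hvK x hx
        exact fun h => hvK (h ▸ hx)
      have hvL : ∀ K' : Set ↥(Ufree v), v ∉ Subtype.val '' K' := by
        rintro K' ⟨x, _, hxv⟩
        exact x.2 hxv
      set N' : Set ↥(Ufree v) := Subtype.val ⁻¹' N with hN'def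
      have hLN' : Subtype.val '' N' = N := image_preimage_of_subset hNU
      by_cases hNmf : MF G v N
      · -- Case (a): N is maximal among v-free cliques; swap its bag to Kv
        have hN'max : _root_.IsMaxClique (G.induce (Ufree v)) N' :=
          mf_iff.mpr (by rw [hLN']; exact hNmf)
        obtain ⟨i₀, hi₀⟩ := hsurj' N' hN'max
        set bag : ι → Set V := fun i => if i = i₀ then Kv else Subtype.val '' (bag' i)
          with hbagdef
        have hbagi₀ : bag i₀ = Kv := by simp [hbagdef]
        have hbagother : ∀ i, i ≠ i₀ → bag i = Subtype.val '' (bag' i) := by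
          intro i hi; simp [hbagdef, hi]
        have hbags : ∀ (u : V) (hu : u ≠ v),
            {i | u ∈ bag i} = {i | (⟨u, hu⟩ : ↥(Ufree v)) ∈ bag' i} := by
          intro u hu
          ext i
          by_cases hii : i = i₀
          · subst hii
            simp only [Set.mem_setOf_eq, hbagi₀, hi₀]
            rw [hmemKv u hu]
            exact Iff.rfl
          · simp only [Set.mem_setOf_eq, hbagother i hii]
            constructor
            · rintro ⟨x, hx, hxu⟩
              have hxe : x = ⟨u, hu⟩ := Subtype.ext hxu
              exact hxe ▸ hx
            · intro h; exact ⟨⟨u, hu⟩, h, rfl⟩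
        have hbagv : {i | v ∈ bag i} = {i₀} := by
          ext i
          by_cases hii : i = i₀
          · subst hii; simp [hbagi₀, hvKv]
          · simp only [Set.mem_setOf_eq, hbagother i hii, Set.mem_singleton_iff, hii, iff_false]
            exact hvL (bag' i)
        refine ⟨ι, T, bag, ⟨htree, ?_, ?_, ?_⟩, ?_, ?_, ?_⟩
        · intro u
          by_cases hu : u = v
          · exact ⟨i₀, by rw [hbagi₀]; exact hu ▸ hvKv⟩
          · obtain ⟨i, hi⟩ := hcov' ⟨u, hu⟩
            refine ⟨i, ?_⟩
            have hmem : i ∈ {j | (⟨u, hu⟩ : ↥(Ufree v)) ∈ bag' j} := hi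
            rw [← hbags u hu] at hmem
            exact hmem
        · intro u w hadj
          by_cases hu : u = v
          · subst hu
            exact ⟨i₀, by rw [hbagi₀]; exact hvKv, by rw [hbagi₀]; exact hNKv hadj⟩
          · by_cases hw : w = v
            · subst hw
              exact ⟨i₀, by rw [hbagi₀]; exact hNKv hadj.symm, by rw [hbagi₀]; exact hvKv⟩
            · obtain ⟨i, hi1, hi2⟩ := hedge' ⟨u, hu⟩ ⟨w, hw⟩ hadj
              refine ⟨i, ?_, ?_⟩
              · have hmem : i ∈ {j | (⟨u, hu⟩ : ↥(Ufree v)) ∈ bag' j} := hi1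
                rw [← hbags u hu] at hmem; exact hmem
              · have hmem : i ∈ {j | (⟨w, hw⟩ : ↥(Ufree v)) ∈ bag' j} := hi2
                rw [← hbags w hw] at hmem; exact hmem
        · intro u
          by_cases hu : u = v
          · subst hu; rw [hbagv]; exact singleton_induce_connected T i₀
          · rw [hbags u hu]; exact hconn' ⟨u, hu⟩
        · intro i j hij
          by_cases hi : i = i₀ <;> by_cases hj : j = i₀
          · rw [hi, hj]
          · exfalso
            rw [hi, hbagi₀, hbagother j hj] at hij
            exact hvL (bag' j) (hij ▸ hvKv)
          · exfalso
            rw [hj, hbagi₀, hbagother i hi] at hij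
            exact hvL (bag' i) (hij.symm ▸ hvKv)
          · rw [hbagother i hi, hbagother j hj] at hij
            exact hinj' (hLinj hij)
        · intro i
          by_cases hi : i = i₀
          · rw [hi, hbagi₀]; exact hKvmax
          · rw [hbagother i hi]
            have hMF : MF G v (Subtype.val '' bag' i) := mf_iff.mp (hmax' i)
            have hneN : Subtype.val '' bag' i ≠ N := by
              intro h
              have hbb : bag' i = N' := hLinj (by
                show Subtype.val '' bag' i = Subtype.val '' N'
                rw [h, hLN'])
              exact hi (hinj' (hbb.trans hi₀.symm))
            exact (hMFchar _ (hvL _)).mpr ⟨hMF, hneN⟩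
        · intro S hS
          by_cases hvS : v ∈ S
          · exact ⟨i₀, by rw [hbagi₀, huniq S hS hvS]⟩
          · obtain ⟨hSMF, hSN⟩ := (hMFchar S hvS).mp hS
            set S' : Set ↥(Ufree v) := Subtype.val ⁻¹' S with hS'def
            have hLS' : Subtype.val '' S' = S := image_preimage_of_subset (hliftU S hvS)
            have hS'max : _root_.IsMaxClique (G.induce (Ufree v)) S' :=
              mf_iff.mpr (by rw [hLS']; exact hSMF)
            obtain ⟨i, hi⟩ := hsurj' S' hS'max
            have hii₀ : i ≠ i₀ := by
              rintro rfl
              have hNS' : N' = S' := hi₀.symm.trans hi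
              exact hSN (by rw [← hLS', ← hNS', hLN'])
            exact ⟨i, by rw [hbagother i hii₀, hi, hLS']⟩
      · -- Case (b): attach a new leaf bag Kv
        obtain ⟨M, hNM, hMcl, hvM, hMmaxf⟩ := exists_max_free_clique_ext hv hvN
        have hMMF : MF G v M := ⟨hMcl, hvM, hMmaxf⟩
        set M' : Set ↥(Ufree v) := Subtype.val ⁻¹' M with hM'def
        have hLM' : Subtype.val '' M' = M := image_preimage_of_subset (hliftU M hvM)
        have hM'max : _root_.IsMaxClique (G.induce (Ufree v)) M' :=
          mf_iff.mpr (by rw [hLM']; exact hMMF)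
        obtain ⟨i₀, hi₀⟩ := hsurj' M' hM'max
        obtain ⟨T', hss, hnone, htree'⟩ := leaf_tree htree i₀
        set bag : Option ι → Set V :=
          fun o => o.elim Kv (fun i => Subtype.val '' (bag' i)) with hbagdef
        have hbagn : bag none = Kv := rfl
        have hbagsome : ∀ i, bag (some i) = Subtype.val '' (bag' i) := fun i => rfl
        have hmemsome : ∀ (u : V) (hu : u ≠ v) (i : ι),
            u ∈ bag (some i) ↔ (⟨u, hu⟩ : ↥(Ufree v)) ∈ bag' i := by
          intro u hu i
          rw [hbagsome]
          constructor
          · rintro ⟨x, hx, hxu⟩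
            have hxe : x = ⟨u, hu⟩ := Subtype.ext hxu
            exact hxe ▸ hx
          · intro h; exact ⟨⟨u, hu⟩, h, rfl⟩
        refine ⟨Option ι, T', bag, ⟨htree', ?_, ?_, ?_⟩, ?_, ?_, ?_⟩
        · intro u
          by_cases hu : u = v
          · exact ⟨none, by rw [hbagn]; exact hu ▸ hvKv⟩
          · obtain ⟨i, hi⟩ := hcov' ⟨u, hu⟩
            exact ⟨some i, (hmemsome u hu i).mpr hi⟩
        · intro u w hadj
          by_cases hu : u = v
          · exact ⟨none, by rw [hbagn, hu]; exact hvKv,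
              by rw [hbagn]; exact hNKv (show G.Adj v w from hu ▸ hadj)⟩
          · by_cases hw : w = v
            · exact ⟨none, by rw [hbagn]; exact hNKv (show G.Adj v u from hw ▸ hadj.symm),
                by rw [hbagn, hw]; exact hvKv⟩
            · obtain ⟨i, hi1, hi2⟩ := hedge' ⟨u, hu⟩ ⟨w, hw⟩ hadj
              exact ⟨some i, (hmemsome u hu i).mpr hi1, (hmemsome w hw i).mpr hi2⟩
        · intro u
          by_cases hu : u = v
          · have hset : {o | u ∈ bag o} = {none} := by
              ext o
              simp only [Set.mem_setOf_eq]
              cases o with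
              | none => exact iff_of_true (by rw [hbagn, hu]; exact hvKv) rfl
              | some i =>
                refine iff_of_false (fun h => hvL (bag' i) ?_) (by simp)
                have h' : u ∈ Subtype.val '' bag' i := by rw [← hbagsome]; exact h
                cases hu
                exact h'
            rw [hset]
            exact singleton_induce_connected T' none
          · set s : Set ι := {i | (⟨u, hu⟩ : ↥(Ufree v)) ∈ bag' i} with hsdef
            by_cases huN : u ∈ N
            · have hset : {o | u ∈ bag o} = insert none (some '' s) := by
                ext o
                simp only [Set.mem_setOf_eq]
                cases o with
                | none =>
                  exact iff_of_true (by rw [hbagn]; exact hNKv huN) (Set.mem_insert _ _)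
                | some i =>
                  rw [hmemsome u hu i]
                  constructor
                  · intro h; exact Set.mem_insert_iff.mpr (Or.inr ⟨i, h, rfl⟩)
                  · intro h
                    rcases Set.mem_insert_iff.mp h with h1 | ⟨j, hj, hji⟩
                    · exact absurd h1 (by simp)
                    · obtain rfl : j = i := by injection hji
                      exact hj
              rw [hset]
              have hi₀s : i₀ ∈ s := by
                show (⟨u, hu⟩ : ↥(Ufree v)) ∈ bag' i₀
                rw [hi₀]
                exact hNM huN
              exact induce_connected_insert (fun i j h => (hss i j).mpr h) hi₀s
                ((hnone (some i₀)).mpr rfl) (hconn' ⟨u, hu⟩)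
            · have hset : {o | u ∈ bag o} = some '' s := by
                ext o
                simp only [Set.mem_setOf_eq]
                cases o with
                | none =>
                  refine iff_of_false (fun h => huN ((hmemKv u hu).mp (by
                    rw [← hbagn]; exact h))) ?_
                  rintro ⟨j, _, hj⟩
                  exact absurd hj (by simp)
                | some i =>
                  rw [hmemsome u hu i]
                  constructor
                  · intro h; exact ⟨i, h, rfl⟩
                  · rintro ⟨j, hj, hji⟩
                    obtain rfl : j = i := by injection hji
                    exact hj
              rw [hset]
              exact induce_connected_map (fun i j h => (hss i j).mpr h) (hconn' ⟨u, hu⟩)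
        · intro o o' h
          cases o with
          | none =>
            cases o' with
            | none => rfl
            | some j =>
              exfalso
              rw [hbagn, hbagsome] at h
              exact hvL (bag' j) (h ▸ hvKv)
          | some i =>
            cases o' with
            | none =>
              exfalso
              rw [hbagn, hbagsome] at h
              exact hvL (bag' i) (h.symm ▸ hvKv)
            | some j =>
              rw [hbagsome, hbagsome] at h
              exact congrArg some (hinj' (hLinj h))
        · intro o
          cases o with
          | none => rw [hbagn]; exact hKvmax
          | some i =>
            rw [hbagsome]
            have hMF : MF G v (Subtype.val '' bag' i) := mf_iff.mp (hmax' i)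
            have hneN : Subtype.val '' bag' i ≠ N := fun h => hNmf (h ▸ hMF)
            exact (hMFchar _ (hvL _)).mpr ⟨hMF, hneN⟩
        · intro S hS
          by_cases hvS : v ∈ S
          · exact ⟨none, by rw [hbagn, huniq S hS hvS]⟩
          · obtain ⟨hSMF, _⟩ := (hMFchar S hvS).mp hS
            set S' : Set ↥(Ufree v) := Subtype.val ⁻¹' S with hS'def
            have hLS' : Subtype.val '' S' = S := image_preimage_of_subset (hliftU S hvS)
            have hS'max : _root_.IsMaxClique (G.induce (Ufree v)) S' :=
              mf_iff.mpr (by rw [hLS']; exact hSMF)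
            obtain ⟨i, hi⟩ := hsurj' S' hS'max
            exact ⟨some i, by rw [hbagsome, hi, hLS']⟩

end CTA
/-- Buneman–Gavril: every chordal graph has a tree decomposition whose bags are exactly
its maximal cliques (a clique tree). -/
theorem stmt_14 {V : Type} [Fintype V] (G : SimpleGraph V) (hG : Chordal G) :
    ∃ (ι : Type) (T : SimpleGraph ι) (bag : ι → Set V),
      IsTreeDecomposition G T bag ∧ Function.Injective bag ∧
      (∀ i, IsMaxClique G (bag i)) ∧ (∀ S : Set V, IsMaxClique G S → ∃ i, bag i = S) :=
  CTA.main (Fintype.card V) V G le_rfl hG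
end

section
/- Let G be a chordal graph, let S be a minimal separator of G, and let T be a clique tree of G. Then there is an edge e of T such that S equals the intersection of the two maximal cliques of G corresponding to the endpoints of e. -/
open SimpleGraph

private lemma walk_in_set {ι : Type} {T : SimpleGraph ι} {P : Set ι}
    (hconn : (T.induce P).Connected) {i j : ι} (hi : i ∈ P) (hj : j ∈ P) :
    ∃ w : T.Walk i j, ∀ k ∈ w.support, k ∈ P := by
  obtain ⟨w⟩ := hconn.preconnected ⟨i, hi⟩ ⟨j, hj⟩
  refine ⟨w.map (SimpleGraph.Embedding.induce P).toHom, ?_⟩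
  intro k hk
  change k ∈ (w.map (SimpleGraph.Embedding.induce P).toHom).support at hk
  rw [SimpleGraph.Walk.support_map, List.mem_map] at hk
  obtain ⟨⟨k', hk'⟩, -, rfl⟩ := hk
  exact hk'

private lemma last_exit {ι : Type} {T : SimpleGraph ι} (P : Set ι) :
    ∀ {x y : ι} (p : T.Walk x y), p.IsPath → x ∈ P → y ∉ P →
      ∃ a b, T.Adj a b ∧ a ∈ P ∧ b ∉ P ∧
        (T.deleteEdges {s(a, b)}).Reachable b y := by
  intro x y p
  induction p with
  | nil => exact fun _ hx hy => absurd hx hy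
  | @cons u z w h q ih =>
    intro hp hx hy
    rw [SimpleGraph.Walk.cons_isPath_iff] at hp
    by_cases hz : z ∈ P
    · exact ih hp.1 hz hy
    · refine ⟨u, z, h, hx, hz, ⟨q.toDeleteEdges _ ?_⟩⟩
      intro e he hmem
      rw [Set.mem_singleton_iff] at hmem
      subst hmem
      exact hp.2 (SimpleGraph.Walk.fst_mem_support_of_mem_edges q he)

private lemma nbr_in_comp {V : Type} {G : SimpleGraph V} {S C : Set V}
    (hCS : ∀ x ∈ C, x ∉ S)
    (hcl : ∀ x ∈ C, ∀ y, G.Adj x y → y ∉ S → y ∈ C) :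
    ∀ {x s : V} (p : G.Walk x s), s ∈ S → x ∈ C →
      (∀ y ∈ p.support, y ∈ S → y = s) → ∃ x' ∈ C, G.Adj x' s := by
  intro x s p
  induction p with
  | nil => intro hsS hx _; exact absurd hsS (hCS _ hx)
  | @cons a z w h q ih =>
    intro hsS hx hsup
    by_cases hzS : z ∈ S
    · have hz : z = w := hsup z (by simp) hzS
      exact ⟨a, hx, hz ▸ h⟩
    · exact ih hsS (hcl _ hx _ h hzS) (fun y hy hyS => hsup y (by simp [hy]) hyS)

private lemma chain_walk {V ι : Type} {G : SimpleGraph V} {T : SimpleGraph ι} {bag : ι → Set V}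
    (hedge : ∀ u v : V, G.Adj u v → ∃ i, u ∈ bag i ∧ v ∈ bag i)
    (hvert : ∀ v : V, (T.induce {i | v ∈ bag i}).Connected)
    (C : Set V) :
    ∀ {x x' : V} (w : G.Walk x x'), (∀ y ∈ w.support, y ∈ C) →
      ∀ {i j : ι}, x ∈ bag i → x' ∈ bag j →
      ∃ q : T.Walk i j, ∀ k ∈ q.support, ∃ z ∈ C, z ∈ bag k := by
  intro x x' w
  induction w with
  | nil =>
    intro hC i j hi hj
    obtain ⟨q, hq⟩ := walk_in_set (hvert _) hi hj
    exact ⟨q, fun k hk => ⟨_, hC _ (by simp), hq k hk⟩⟩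
  | @cons a z b h q ih =>
    intro hC i j hi hj
    obtain ⟨k, hk1, hk2⟩ := hedge a z h
    obtain ⟨q1, hq1⟩ := walk_in_set (hvert a) hi hk1
    obtain ⟨q2, hq2⟩ := ih (fun y hy => hC y (by simp [hy])) hk2 hj
    refine ⟨q1.append q2, fun m hm => ?_⟩
    rw [SimpleGraph.Walk.mem_support_append_iff] at hm
    rcases hm with hm | hm
    · exact ⟨a, hC a (by simp), hq1 m hm⟩
    · exact hq2 m hm

/-- In a clique tree of a chordal graph, every minimal separator is the intersection of the
two maximal cliques at the endpoints of some edge of the tree. -/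
theorem stmt_15 {V ι : Type} [Fintype V] (G : SimpleGraph V) (hG : Chordal G)
    (S : Set V) (hS : IsMinimalSeparator G S)
    (T : SimpleGraph ι) (bag : ι → Set V)
    (hT : IsTreeDecomposition G T bag)
    (hmax : ∀ i, IsMaxClique G (bag i))
    (hsurj : ∀ K : Set V, IsMaxClique G K → ∃ i, bag i = K) :
    ∃ i j, T.Adj i j ∧ S = bag i ∩ bag j := by
  classical
  obtain ⟨u, v, huv, hnadj, hsep, hmin⟩ := hS
  obtain ⟨hTtree, hvertex, hedge, hconn⟩ := hT
  -- components of u and v in G - S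
  set Cu : Set V := {x | ∃ p : G.Walk u x, ∀ y ∈ p.support, y ∉ S} with hCu_def
  set Cv : Set V := {x | ∃ p : G.Walk v x, ∀ y ∈ p.support, y ∉ S} with hCv_def
  have huCu : u ∈ Cu := ⟨Walk.nil, by intro y hy; simp at hy; subst hy; exact hsep.1⟩
  have hvCv : v ∈ Cv := ⟨Walk.nil, by intro y hy; simp at hy; subst hy; exact hsep.2.1⟩
  have hCuS : ∀ x ∈ Cu, x ∉ S := fun x ⟨p, hp⟩ => hp x p.end_mem_support
  have hCvS : ∀ x ∈ Cv, x ∉ S := fun x ⟨p, hp⟩ => hp x p.end_mem_support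
  have hCucl : ∀ x ∈ Cu, ∀ y, G.Adj x y → y ∉ S → y ∈ Cu := by
    rintro x ⟨p, hp⟩ y hadj hyS
    refine ⟨p.concat hadj, fun z hz => ?_⟩
    rw [Walk.support_concat, List.mem_append] at hz
    rcases hz with hz | hz
    · exact hp z hz
    · simp at hz; subst hz; exact hyS
  have hCvcl : ∀ x ∈ Cv, ∀ y, G.Adj x y → y ∉ S → y ∈ Cv := by
    rintro x ⟨p, hp⟩ y hadj hyS
    refine ⟨p.concat hadj, fun z hz => ?_⟩
    rw [Walk.support_concat, List.mem_append] at hz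
    rcases hz with hz | hz
    · exact hp z hz
    · simp at hz; subst hz; exact hyS
  have hCusup : ∀ {x : V} (p : G.Walk u x), (∀ y ∈ p.support, y ∉ S) →
      ∀ y ∈ p.support, y ∈ Cu := fun p hp y hy =>
    ⟨p.takeUntil y hy, fun z hz => hp z (p.support_takeUntil_subset hy hz)⟩
  have hCvsup : ∀ {x : V} (p : G.Walk v x), (∀ y ∈ p.support, y ∉ S) →
      ∀ y ∈ p.support, y ∈ Cv := fun p hp y hy =>
    ⟨p.takeUntil y hy, fun z hz => hp z (p.support_takeUntil_subset hy hz)⟩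
  have hdisj : ∀ x, x ∈ Cu → x ∈ Cv → False := by
    rintro x ⟨p, hp⟩ ⟨p', hp'⟩
    obtain ⟨z, hz, hzS⟩ := hsep.2.2 (p.append p'.reverse)
    rw [Walk.mem_support_append_iff] at hz
    rcases hz with hz | hz
    · exact hp z hz hzS
    · rw [Walk.support_reverse, List.mem_reverse] at hz
      exact hp' z hz hzS
  -- walks inside Cu between any two of its members
  have hwalkCu : ∀ x ∈ Cu, ∀ x' ∈ Cu, ∃ w : G.Walk x x', ∀ y ∈ w.support, y ∈ Cu := by
    rintro x ⟨p, hp⟩ x' ⟨p', hp'⟩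
    refine ⟨p.reverse.append p', fun y hy => ?_⟩
    rw [Walk.mem_support_append_iff] at hy
    rcases hy with hy | hy
    · rw [Walk.support_reverse, List.mem_reverse] at hy
      exact hCusup p hp y hy
    · exact hCusup p' hp' y hy
  have hwalkCv : ∀ x ∈ Cv, ∀ x' ∈ Cv, ∃ w : G.Walk x x', ∀ y ∈ w.support, y ∈ Cv := by
    rintro x ⟨p, hp⟩ x' ⟨p', hp'⟩
    refine ⟨p.reverse.append p', fun y hy => ?_⟩
    rw [Walk.mem_support_append_iff] at hy
    rcases hy with hy | hy
    · rw [Walk.support_reverse, List.mem_reverse] at hy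
      exact hCvsup p hp y hy
    · exact hCvsup p' hp' y hy
  -- every s ∈ S has a neighbor in Cu and in Cv
  have hnbr : ∀ s ∈ S, (∃ x ∈ Cu, G.Adj x s) ∧ (∃ y ∈ Cv, G.Adj y s) := by
    intro s hsS
    have hss : S \ {s} ⊂ S := Set.sdiff_singleton_ssubset.mpr hsS
    have hns := hmin _ hss
    have hex : ∃ p : G.Walk u v, ∀ x ∈ p.support, x ∉ S \ {s} := by
      by_contra hcon
      push_neg at hcon
      exact hns ⟨fun h => hsep.1 h.1, fun h => hsep.2.1 h.1, fun p => hcon p⟩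
    obtain ⟨p, hp⟩ := hex
    obtain ⟨x₀, hx₀, hx₀S⟩ := hsep.2.2 p
    have hx₀s : x₀ = s := by
      by_contra hne
      exact hp x₀ hx₀ ⟨hx₀S, hne⟩
    subst hx₀s
    constructor
    · refine nbr_in_comp hCuS hCucl (p.takeUntil x₀ hx₀) hx₀S huCu ?_
      intro y hy hyS
      by_contra hne
      exact hp y (p.support_takeUntil_subset hx₀ hy) ⟨hyS, hne⟩
    · have hx₀r : x₀ ∈ p.reverse.support := by
        rw [Walk.support_reverse, List.mem_reverse]; exact hx₀
      refine nbr_in_comp hCvS hCvcl (p.reverse.takeUntil x₀ hx₀r) hx₀S hvCv ?_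
      intro y hy hyS
      by_contra hne
      have := p.reverse.support_takeUntil_subset hx₀r hy
      rw [Walk.support_reverse, List.mem_reverse] at this
      exact hp y this ⟨hyS, hne⟩
  -- tree node sets
  set Iu : Set ι := {i | ∃ x ∈ Cu, x ∈ bag i} with hIu_def
  set Iv : Set ι := {i | ∃ x ∈ Cv, x ∈ bag i} with hIv_def
  have hIdisj : ∀ i, i ∈ Iu → i ∈ Iv → False := by
    rintro i ⟨x, hxCu, hxb⟩ ⟨y, hyCv, hyb⟩
    have hne : x ≠ y := fun h => hdisj x hxCu (h ▸ hyCv)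
    have hadj : G.Adj x y := (hmax i).1 hxb hyb hne
    exact hdisj y (hCucl x hxCu y hadj (hCvS y hyCv)) hyCv
  obtain ⟨i₀, hi₀⟩ := hvertex u
  obtain ⟨j₀, hj₀⟩ := hvertex v
  have hi₀Iu : i₀ ∈ Iu := ⟨u, huCu, hi₀⟩
  have hj₀Iv : j₀ ∈ Iv := ⟨v, hvCv, hj₀⟩
  have hj₀Iu : j₀ ∉ Iu := fun h => hIdisj j₀ h hj₀Iv
  obtain ⟨w0⟩ := hTtree.isConnected.preconnected i₀ j₀
  obtain ⟨a, b, hab, haIu, hbIu, hreach⟩ :=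
    last_exit Iu (w0.toPath : T.Walk i₀ j₀) w0.toPath.2 hi₀Iu hj₀Iu
  set T' : SimpleGraph ι := T.deleteEdges {s(a, b)} with hT'_def
  have hbr : ¬ T'.Reachable a b := by
    have hbridge := (isAcyclic_iff_forall_edge_isBridge.mp hTtree.2)
      (show s(a, b) ∈ T.edgeSet from hab)
    rw [isBridge_iff] at hbridge
    exact hbridge
  -- reaching a from Iu and b from Iv in T'
  have hreachA : ∀ i ∈ Iu, T'.Reachable i a := by
    rintro i ⟨x, hxCu, hxb⟩
    obtain ⟨xa, hxaCu, hxab⟩ := haIu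
    obtain ⟨wg, hwg⟩ := hwalkCu x hxCu xa hxaCu
    obtain ⟨q, hq⟩ := chain_walk hedge hconn Cu wg hwg hxb hxab
    refine ⟨q.toDeleteEdges _ ?_⟩
    intro e he hmem
    rw [Set.mem_singleton_iff] at hmem
    subst hmem
    exact hbIu (hq b (Walk.snd_mem_support_of_mem_edges q he))
  have hreachB : ∀ j ∈ Iv, T'.Reachable j b := by
    rintro j ⟨y, hyCv, hyb⟩
    obtain ⟨yv, hyvCv, hyvb⟩ := hj₀Iv
    obtain ⟨wg, hwg⟩ := hwalkCv y hyCv yv hyvCv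
    obtain ⟨q, hq⟩ := chain_walk hedge hconn Cv wg hwg hyb hyvb
    have : T'.Reachable j j₀ := by
      refine ⟨q.toDeleteEdges _ ?_⟩
      intro e he hmem
      rw [Set.mem_singleton_iff] at hmem
      subst hmem
      exact hIdisj a haIu (hq a (Walk.fst_mem_support_of_mem_edges q he))
    exact this.trans hreach.symm
  -- crossing lemma
  have hcross : ∀ x i j, x ∈ bag i → x ∈ bag j → T'.Reachable i a → T'.Reachable j b →
      x ∈ bag a ∧ x ∈ bag b := by
    intro x i j hxi hxj hia hjb
    obtain ⟨q, hq⟩ := walk_in_set (hconn x) hxi hxj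
    by_cases hE : s(a, b) ∈ q.edges
    · exact ⟨hq a (Walk.fst_mem_support_of_mem_edges q hE),
        hq b (Walk.snd_mem_support_of_mem_edges q hE)⟩
    · exfalso
      have hij : T'.Reachable i j := by
        refine ⟨q.toDeleteEdges _ ?_⟩
        intro e he hmem
        rw [Set.mem_singleton_iff] at hmem
        exact hE (hmem ▸ he)
      exact hbr ((hia.symm.trans hij).trans hjb)
  refine ⟨a, b, hab, Set.eq_of_subset_of_subset ?_ ?_⟩
  · intro s hsS
    obtain ⟨⟨x, hxCu, hxs⟩, ⟨y, hyCv, hys⟩⟩ := hnbr s hsS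
    obtain ⟨i, hix, his⟩ := hedge x s hxs
    obtain ⟨j, hjy, hjs⟩ := hedge y s hys
    exact hcross s i j his hjs (hreachA i ⟨x, hxCu, hix⟩) (hreachB j ⟨y, hyCv, hjy⟩)
  · rintro z ⟨hza, hzb⟩
    by_contra hzS
    obtain ⟨x, hxCu, hxa⟩ := haIu
    have hzCu : z ∈ Cu := by
      by_cases hzx : z = x
      · exact hzx ▸ hxCu
      · exact hCucl x hxCu z ((hmax a).1 hxa hza (Ne.symm hzx)) hzS
    exact hbIu ⟨z, hzCu, hzb⟩
end
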